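/- arXiv:2605.26815 — 11 statements merged into one kernel-verified Lean document; each statement's English description precedes it below -/
import Mathlib

section
/- For all c ≥ 1 and k_1,...,k_c ≥ 2, the mixed vertex-coprime Ramsey number satisfies R_cop(k_1,...,k_c) = p_M where M = Σ_{i=1}^c (k_i − 1) and p_M is the M-th prime. -/
open Finset

private lemma sigma_fiber_card {c : ℕ} (k' : Fin c → ℕ) (i : Fin c) :
    Fintype.card {p : Σ j : Fin c, Fin (k' j) // p.1 = i} = k' i := by
  have e : {p : Σ j : Fin c, Fin (k' j) // p.1 = i} ≃ Fin (k' i) :=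
    { toFun := fun p => Fin.cast (congrArg k' p.2) p.1.2
      invFun := fun x => ⟨⟨i, x⟩, rfl⟩
      left_inv := by rintro ⟨⟨j, x⟩, rfl⟩; rfl
      right_inv := fun x => rfl }
  simp [Fintype.card_congr e]

/-- The mixed vertex-coprime Ramsey number: the least `n` such that every `c`-coloring
of `{1,...,n}` has a color `i` whose class contains `k i` pairwise coprime integers
equals the `M`-th prime, where `M = ∑ i, (k i - 1)` (primes are 1-indexed, so the
`M`-th prime is `Nat.nth Nat.Prime (M - 1)`). -/
theorem vertex_coprime_ramsey (c : ℕ) (hc : 1 ≤ c) (k : Fin c → ℕ)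
    (hk : ∀ i, 2 ≤ k i) :
    IsLeast {n : ℕ | ∀ χ : ℕ → Fin c, ∃ i : Fin c, ∃ S : Finset ℕ,
      ↑S ⊆ Set.Icc 1 n ∧ (∀ a ∈ S, χ a = i) ∧
      (S : Set ℕ).Pairwise Nat.Coprime ∧ S.card = k i}
    (Nat.nth Nat.Prime (∑ i, (k i - 1) - 1)) := by
  classical
  set M := ∑ i, (k i - 1) with hM
  have hM1 : 1 ≤ M := by
    have h0 := hk ⟨0, hc⟩
    calc 1 ≤ k ⟨0, hc⟩ - 1 := by omega
    _ ≤ M := Finset.single_le_sum (f := fun i => k i - 1)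
        (fun _ _ => Nat.zero_le _) (Finset.mem_univ (⟨0, hc⟩ : Fin c))
  set P := Nat.nth Nat.Prime (M - 1) with hP
  have hPprime : P.Prime := Nat.prime_nth_prime _
  constructor
  · -- membership
    intro χ
    set T : Finset ℕ := insert 1 ((range M).image (Nat.nth Nat.Prime)) with hT
    have h1T : (1 : ℕ) ∉ (range M).image (Nat.nth Nat.Prime) := by
      simp only [mem_image, mem_range, not_exists]
      rintro j ⟨-, hj⟩
      exact (Nat.prime_nth_prime j).one_lt.ne' hj
    have hTcard : T.card = M + 1 := by
      rw [hT, card_insert_of_notMem h1T,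
        card_image_of_injective _ (Nat.nth_injective Nat.infinite_setOf_prime), card_range]
    have hTsub : ↑T ⊆ Set.Icc 1 P := by
      intro a ha
      simp only [hT, coe_insert, Set.mem_insert_iff, mem_coe, mem_image, mem_range] at ha
      rcases ha with rfl | ⟨j, hj, rfl⟩
      · exact ⟨le_refl 1, hPprime.one_lt.le⟩
      · refine ⟨(Nat.prime_nth_prime j).one_lt.le, ?_⟩
        exact (Nat.nth_le_nth Nat.infinite_setOf_prime).2 (by omega)
    have hTcop : (↑T : Set ℕ).Pairwise Nat.Coprime := by
      intro x hx y hy hxy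
      have hx' : x = 1 ∨ x.Prime := by
        simp only [hT, coe_insert, Set.mem_insert_iff, mem_coe, mem_image, mem_range] at hx
        rcases hx with rfl | ⟨j, -, rfl⟩
        · exact Or.inl rfl
        · exact Or.inr (Nat.prime_nth_prime j)
      have hy' : y = 1 ∨ y.Prime := by
        simp only [hT, coe_insert, Set.mem_insert_iff, mem_coe, mem_image, mem_range] at hy
        rcases hy with rfl | ⟨j, -, rfl⟩
        · exact Or.inl rfl
        · exact Or.inr (Nat.prime_nth_prime j)
      rcases hx' with rfl | hxp
      · exact Nat.coprime_one_left y
      rcases hy' with rfl | hyp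
      · exact Nat.coprime_one_right x
      exact (Nat.coprime_primes hxp hyp).2 hxy
    have hex : ∃ i, k i ≤ (T.filter fun a => χ a = i).card := by
      by_contra h
      push_neg at h
      have hsum : T.card = ∑ i, (T.filter fun a => χ a = i).card :=
        card_eq_sum_card_fiberwise (fun a _ => mem_univ (χ a))
      have hle : ∑ i, (T.filter fun a => χ a = i).card ≤ M :=
        hM ▸ Finset.sum_le_sum fun i _ => by have := h i; omega
      omega
    obtain ⟨i, hi⟩ := hex
    obtain ⟨S, hSsub, hScard⟩ := Finset.exists_subset_card_eq hi
    have hST : S ⊆ T := hSsub.trans (filter_subset _ _)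
    refine ⟨i, S, fun a ha => hTsub (hST ha), fun a ha => (mem_filter.1 (hSsub ha)).2,
      hTcop.mono (by exact_mod_cast hST), hScard⟩
  · -- lower bound
    intro n hn
    by_contra hlt
    push_neg at hlt
    have e : (Σ j : Fin c, Fin (k j - 1)) ≃ Fin M :=
      Fintype.equivFinOfCardEq (by simp [hM])
    set g : Fin M → Fin c := fun s => (e.symm s).1 with hg
    set slotN : ℕ → ℕ := fun a =>
      if a = 1 then M - 1 else Nat.count Nat.Prime (Nat.minFac a) with hslotN
    set slot : ℕ → Fin M := fun a => ⟨min (slotN a) (M - 1), by omega⟩ with hslot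
    obtain ⟨i, S, hSsub, hScol, hScop, hScard⟩ := hn (fun a => g (slot a))
    -- slot values for elements of S
    have hmem : ∀ a ∈ S, 1 ≤ a ∧ a ≤ n := fun a ha => hSsub (mem_coe.2 ha)
    have hcount : ∀ a ∈ S, a ≠ 1 → Nat.count Nat.Prime (Nat.minFac a) < M - 1 := by
      intro a ha h1
      have ⟨ha1, han⟩ := hmem a ha
      have h2 : 2 ≤ a := by omega
      have hp : (Nat.minFac a).Prime := Nat.minFac_prime h1
      have hle : Nat.minFac a < P :=
        lt_of_le_of_lt (Nat.minFac_le (by omega)) (lt_of_le_of_lt han hlt)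
      rw [← Nat.nth_count hp] at hle
      exact (Nat.nth_lt_nth Nat.infinite_setOf_prime).1 hle
    have hslotval : ∀ a ∈ S, (slot a : ℕ) = slotN a := by
      intro a ha
      by_cases h1 : a = 1
      · simp [hslot, hslotN, h1]
      · have := hcount a ha h1
        simp only [hslot, hslotN, if_neg h1]
        omega
    -- injectivity of slot on S
    have hinj : Set.InjOn slot ↑S := by
      intro a ha b hb hab
      by_contra hne
      have hcop := hScop ha hb hne
      have ha' := hmem a (mem_coe.1 ha)
      have hb' := hmem b (mem_coe.1 hb)
      have hab' : slotN a = slotN b := by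
        have := congrArg (Fin.val) hab
        rwa [hslotval a (mem_coe.1 ha), hslotval b (mem_coe.1 hb)] at this
      by_cases h1 : a = 1
      · subst h1
        have hb1 : b ≠ 1 := fun h => hne h.symm
        have := hcount b (mem_coe.1 hb) hb1
        simp only [hslotN, if_pos rfl, if_neg hb1] at hab'
        omega
      · by_cases h2 : b = 1
        · subst h2
          have := hcount a (mem_coe.1 ha) h1
          simp only [hslotN, if_neg h1, if_pos rfl] at hab'
          omega
        · simp only [hslotN, if_neg h1, if_neg h2] at hab'
          have hpa : (Nat.minFac a).Prime := Nat.minFac_prime h1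
          have hpb : (Nat.minFac b).Prime := Nat.minFac_prime h2
          have : Nat.minFac a = Nat.minFac b := by
            have := congrArg (Nat.nth Nat.Prime) hab'
            rwa [Nat.nth_count hpa, Nat.nth_count hpb] at this
          have hdvd : Nat.minFac a ∣ Nat.gcd a b :=
            Nat.dvd_gcd (Nat.minFac_dvd a) (this ▸ Nat.minFac_dvd b)
          rw [Nat.Coprime] at hcop
          rw [hcop] at hdvd
          exact hpa.one_lt.ne' (Nat.dvd_one.1 hdvd)
    -- fiber cardinality
    have hfiber : (univ.filter fun s => g s = i).card = k i - 1 := by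
      calc (univ.filter fun s => g s = i).card
          = Fintype.card {x : Fin M // g x = i} := (Fintype.card_subtype _).symm
        _ = Fintype.card {p : Σ j : Fin c, Fin (k j - 1) // p.1 = i} :=
            Fintype.card_congr (Equiv.subtypeEquiv e.symm fun s => Iff.rfl)
        _ = k i - 1 := sigma_fiber_card _ i
    have hmaps : ∀ a ∈ S, slot a ∈ univ.filter fun s => g s = i := by
      intro a ha
      simp only [mem_filter, mem_univ, true_and]
      exact hScol a ha
    have := Finset.card_le_card_of_injOn slot hmaps hinj
    rw [hScard, hfiber] at this
    have := hk i
    omega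
end

section
/- If n = p_M where M = Σ_{i=1}^c (k_i − 1), then every c-coloring of {1,...,n} has some color class containing k_i pairwise coprime integers for the corresponding color i. -/
/-- Upper-bound direction: at `n = p_M` with `M = ∑ (k i - 1)`, every `c`-coloring of
`{1,...,n}` has some color class containing `k i` pairwise coprime integers. -/
theorem vertex_coprime_ramsey_upper (c : ℕ) (hc : 1 ≤ c) (k : Fin c → ℕ)
    (hk : ∀ i, 2 ≤ k i) (n : ℕ)
    (hn : n = Nat.nth Nat.Prime (∑ i, (k i - 1) - 1)) (χ : ℕ → Fin c) :
    ∃ i : Fin c, ∃ S : Finset ℕ, ↑S ⊆ Set.Icc 1 n ∧ (∀ a ∈ S, χ a = i) ∧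
      (S : Set ℕ).Pairwise Nat.Coprime ∧ S.card = k i := by
  set M := ∑ i, (k i - 1) with hM
  have hMpos : 1 ≤ M := by
    obtain ⟨i⟩ : Nonempty (Fin c) := ⟨⟨0, hc⟩⟩
    calc 1 ≤ k i - 1 := by have := hk i; omega
    _ ≤ M := by
      rw [hM]
      exact Finset.single_le_sum (f := fun i => k i - 1) (fun _ _ => Nat.zero_le _) (Finset.mem_univ i)
  have hmono : StrictMono (Nat.nth Nat.Prime) :=
    Nat.nth_strictMono Nat.infinite_setOf_prime
  -- the base set: 1 together with the first M primes
  set T : Finset ℕ := insert 1 ((Finset.range M).image (Nat.nth Nat.Prime)) with hT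
  have hprime : ∀ j, (Nat.nth Nat.Prime j).Prime := Nat.prime_nth_prime
  have h1T : (1:ℕ) ∉ (Finset.range M).image (Nat.nth Nat.Prime) := by
    simp only [Finset.mem_image, Finset.mem_range, not_exists]
    rintro j ⟨_, h⟩
    exact Nat.Prime.one_lt (hprime j) |>.ne' h
  have hcardT : T.card = M + 1 := by
    rw [hT, Finset.card_insert_of_notMem h1T,
      Finset.card_image_of_injective _ hmono.injective, Finset.card_range]
  have hsub : ∀ a ∈ T, a ∈ Set.Icc 1 n := by
    intro a ha
    rw [hT, Finset.mem_insert] at ha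
    rcases ha with rfl | ha
    · constructor
      · exact le_refl 1
      · rw [hn]; exact Nat.Prime.one_lt (hprime _) |>.le
    · obtain ⟨j, hj, rfl⟩ := Finset.mem_image.mp ha
      rw [Finset.mem_range] at hj
      refine ⟨(hprime j).one_lt.le, ?_⟩
      rw [hn]
      exact hmono.monotone (by omega)
  have hcop : (T : Set ℕ).Pairwise Nat.Coprime := by
    intro a ha b hb hab
    simp only [hT, Finset.coe_insert, Set.mem_insert_iff, Finset.coe_image,
      Set.mem_image, Finset.mem_coe, Finset.mem_range] at ha hb
    rcases ha with rfl | ⟨ja, _, rfl⟩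
    · exact Nat.coprime_one_left _
    rcases hb with rfl | ⟨jb, _, rfl⟩
    · exact Nat.coprime_one_right _
    · exact (Nat.coprime_primes (hprime ja) (hprime jb)).mpr
        (fun h => hab (congrArg _ (hmono.injective h)))
  -- pigeonhole
  have key : ∃ i : Fin c, k i ≤ (T.filter (fun a => χ a = i)).card := by
    by_contra h
    push_neg at h
    have hsum : T.card = ∑ i : Fin c, (T.filter (fun a => χ a = i)).card :=
      Finset.card_eq_sum_card_fiberwise (fun a _ => Finset.mem_univ (χ a))
    have : T.card ≤ ∑ i, (k i - 1) := by
      rw [hsum]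
      refine Finset.sum_le_sum fun i _ => ?_
      have := h i; omega
    omega
  obtain ⟨i, hi⟩ := key
  obtain ⟨S, hS, hScard⟩ := Finset.exists_subset_card_eq hi
  refine ⟨i, S, ?_, ?_, ?_, hScard⟩
  · intro a ha
    exact hsub a (Finset.filter_subset _ _ (hS (by exact_mod_cast ha)))
  · intro a ha
    exact (Finset.mem_filter.mp (hS ha)).2
  · exact hcop.mono (fun a ha => Finset.mem_coe.mp (Finset.filter_subset _ _ (hS ha)))
end

section
/- If n < p_M where M = Σ_{i=1}^c (k_i − 1) with k_1,...,k_c ≥ 2, then there exists a c-coloring of {1,...,n} such that for every color i, the color class contains no k_i pairwise coprime integers. -/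
/-- Lower-bound direction: for `n < p_M` with `M = ∑ (k i - 1)` there is a `c`-coloring
of `{1,...,n}` whose color classes contain no `k i` pairwise coprime integers. -/
theorem vertex_coprime_ramsey_lower (c : ℕ) (hc : 1 ≤ c) (k : Fin c → ℕ)
    (hk : ∀ i, 2 ≤ k i) (n : ℕ)
    (hn : n < Nat.nth Nat.Prime (∑ i, (k i - 1) - 1)) :
    ∃ χ : ℕ → Fin c, ∀ i : Fin c, ¬ ∃ S : Finset ℕ, ↑S ⊆ Set.Icc 1 n ∧
      (∀ a ∈ S, χ a = i) ∧ (S : Set ℕ).Pairwise Nat.Coprime ∧ S.card = k i := by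
  classical
  set M := ∑ i, (k i - 1) with hM
  set i0 : Fin c := ⟨0, hc⟩ with hi0
  set cap : Fin c → ℕ := fun i => if i = i0 then k i - 2 else k i - 1 with hcap
  set Sm : Fin c → ℕ := fun i => ∑ i' ∈ Finset.univ.filter (· < i), cap i' with hSm
  have hcaple : ∀ i, cap i ≤ k i - 1 := by
    intro i; simp only [hcap]; split <;> omega
  have htotal : ∑ i, cap i = M - 1 := by
    have h1 : ∑ i, cap i + 1 = ∑ i, (k i - 1) := by
      rw [← Finset.add_sum_erase _ cap (Finset.mem_univ i0),
          ← Finset.add_sum_erase _ (fun i => k i - 1) (Finset.mem_univ i0)]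
      have h2 : ∑ x ∈ Finset.univ.erase i0, cap x
          = ∑ x ∈ Finset.univ.erase i0, (k x - 1) :=
        Finset.sum_congr rfl (fun i hi => by
          simp only [hcap, if_neg (Finset.mem_erase.mp hi).1])
      rw [h2]
      have := hk i0
      have h3 : cap i0 = k i0 - 2 := by simp only [hcap, if_pos rfl]
      omega
    omega
  have hS0 : Sm i0 = 0 := by
    simp only [hSm]
    rw [Finset.filter_false_of_mem, Finset.sum_empty]
    intro i _
    simp [Fin.lt_def, hi0]
  have hfne : ∀ j : ℕ, (Finset.univ.filter (fun i => Sm i ≤ j)).Nonempty := by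
    intro j
    exact ⟨i0, by simp [hS0]⟩
  set f : ℕ → Fin c := fun j => (Finset.univ.filter (fun i => Sm i ≤ j)).max' (hfne j)
    with hf
  have hfmem : ∀ j, Sm (f j) ≤ j := by
    intro j
    have := Finset.max'_mem _ (hfne j)
    simpa using this
  have hlt : ∀ j, j < M - 1 → j < Sm (f j) + cap (f j) := by
    intro j hj
    set i := f j with hi
    by_cases h : i.val + 1 < c
    · set i' : Fin c := ⟨i.val + 1, h⟩ with hi'
      have hni' : ¬ Sm i' ≤ j := by
        intro hle
        have : i' ≤ i := Finset.le_max' _ i' (by simpa using hle)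
        simp [Fin.le_def, hi'] at this
      have heq : Finset.univ.filter (· < i') = insert i (Finset.univ.filter (· < i)) := by
        ext x
        simp only [Finset.mem_filter, Finset.mem_insert, Finset.mem_univ, true_and,
          Fin.lt_def, hi']
        constructor
        · intro hx
          rcases Nat.lt_or_ge x.val i.val with h1 | h1
          · exact Or.inr h1
          · exact Or.inl (Fin.ext (by omega))
        · rintro (rfl | hx) <;> omega
      have hSi' : Sm i' = cap i + Sm i := by
        simp only [hSm] at *
        rw [heq, Finset.sum_insert (by simp)]
      omega
    · -- i is the last color
      have huniv : insert i (Finset.univ.filter (· < i)) = Finset.univ := by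
        ext x
        simp only [Finset.mem_insert, Finset.mem_filter, Finset.mem_univ, true_and,
          Fin.lt_def, iff_true]
        have hx := x.isLt
        rcases Nat.lt_or_ge x.val i.val with h1 | h1
        · exact Or.inr h1
        · exact Or.inl (Fin.ext (by omega))
      have : cap i + Sm i = M - 1 := by
        rw [← htotal, ← huniv, Finset.sum_insert (by simp)]
      omega
  refine ⟨fun m => if m ≤ 1 then i0 else f (Nat.count Nat.Prime m.minFac), ?_⟩
  rintro i ⟨S, hSsub, hScol, hScop, hcard⟩
  set T := S.erase 1 with hT
  have hTmem : ∀ m ∈ T, 2 ≤ m ∧ m ≤ n := by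
    intro m hm
    have hm1 : m ≠ 1 := (Finset.mem_erase.mp hm).1
    have hmS : m ∈ S := (Finset.mem_erase.mp hm).2
    have := hSsub hmS
    simp only [Set.mem_Icc] at this
    omega
  have hTcol : ∀ m ∈ T, f (Nat.count Nat.Prime m.minFac) = i := by
    intro m hm
    have hm2 := (hTmem m hm).1
    have := hScol m (Finset.mem_erase.mp hm).2
    simp only at this
    rw [if_neg (by omega)] at this
    exact this
  have hjbound : ∀ m ∈ T, Nat.count Nat.Prime m.minFac < M - 1 := by
    intro m hm
    obtain ⟨hm2, hmn⟩ := hTmem m hm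
    have hp : Nat.Prime m.minFac := Nat.minFac_prime (by omega)
    have hple : m.minFac ≤ m := Nat.minFac_le (by omega)
    by_contra hge
    push_neg at hge
    have h2 : Nat.nth Nat.Prime (M - 1) ≤ Nat.nth Nat.Prime (Nat.count Nat.Prime m.minFac) :=
      (Nat.nth_le_nth Nat.infinite_setOf_prime).mpr hge
    rw [Nat.nth_count hp] at h2
    omega
  have hmap : ∀ m ∈ T,
      Nat.count Nat.Prime m.minFac ∈ Finset.Ico (Sm i) (Sm i + cap i) := by
    intro m hm
    have h1 := hfmem (Nat.count Nat.Prime m.minFac)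
    have h2 := hlt (Nat.count Nat.Prime m.minFac) (hjbound m hm)
    rw [hTcol m hm] at h1 h2
    simp only [Finset.mem_Ico]
    exact ⟨h1, h2⟩
  have hinj : ∀ a ∈ T, ∀ b ∈ T,
      Nat.count Nat.Prime a.minFac = Nat.count Nat.Prime b.minFac → a = b := by
    intro a ha b hb hab
    by_contra hne
    have ha2 := (hTmem a ha).1
    have hb2 := (hTmem b hb).1
    have hpa : Nat.Prime a.minFac := Nat.minFac_prime (by omega)
    have hpb : Nat.Prime b.minFac := Nat.minFac_prime (by omega)
    have hfac : a.minFac = b.minFac := by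
      have := congrArg (Nat.nth Nat.Prime) hab
      rwa [Nat.nth_count hpa, Nat.nth_count hpb] at this
    have hcop : Nat.Coprime a b := hScop (by
        exact (Finset.mem_erase.mp ha).2) (by
        exact (Finset.mem_erase.mp hb).2) hne
    have hd1 : a.minFac ∣ a := Nat.minFac_dvd a
    have hd2 : a.minFac ∣ b := hfac ▸ Nat.minFac_dvd b
    have hdg : a.minFac ∣ 1 := hcop ▸ Nat.dvd_gcd hd1 hd2
    exact hpa.ne_one (Nat.dvd_one.mp hdg)
  have hTcard : T.card ≤ cap i := by
    calc T.card ≤ (Finset.Ico (Sm i) (Sm i + cap i)).card :=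
          Finset.card_le_card_of_injOn _ hmap hinj
      _ = cap i := by rw [Nat.card_Ico]; omega
  by_cases h1 : 1 ∈ S
  · have hii0 : i = i0 := by
      have := hScol 1 h1
      simp only at this
      rw [if_pos (le_refl 1)] at this
      exact this.symm
    have : S.card = T.card + 1 := by
      rw [hT, Finset.card_erase_of_mem h1]
      have : 1 ≤ S.card := Finset.card_pos.mpr ⟨1, h1⟩
      omega
    have hki := hk i
    have : cap i = k i - 2 := by simp only [hcap, if_pos hii0]
    omega
  · have hTS : T = S := Finset.erase_eq_of_notMem h1
    have := hcaple i
    have hki := hk i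
    rw [hTS] at hTcard
    omega
end

section
/- For k, c ≥ 2, the diagonal vertex-coprime Ramsey number R_cop(k;c) equals p_{c(k−1)}, and for s,t ≥ 2 the two-color off-diagonal value R_cop(s,t) equals p_{s+t−2}. -/
open Finset

private lemma nth_prime_strictMono : StrictMono (Nat.nth Nat.Prime) :=
  Nat.nth_strictMono Nat.infinite_setOf_prime

private lemma count_lt_of_lt_nth {p : ℕ} (hp : p.Prime) {m : ℕ}
    (h : p < Nat.nth Nat.Prime m) : Nat.count Nat.Prime p < m := by
  by_contra hcon
  push_neg at hcon
  have := nth_prime_strictMono.monotone hcon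
  rw [Nat.nth_count hp] at this
  omega

private theorem cop_general {c : ℕ} (hc : 0 < c) (k : Fin c → ℕ) (hk : ∀ i, 2 ≤ k i) :
    IsLeast {n : ℕ | ∀ χ : ℕ → Fin c, ∃ i : Fin c, ∃ S : Finset ℕ,
        ↑S ⊆ Set.Icc 1 n ∧ (∀ a ∈ S, χ a = i) ∧
        (S : Set ℕ).Pairwise Nat.Coprime ∧ S.card = k i}
      (Nat.nth Nat.Prime ((∑ i, (k i - 1)) - 1)) := by
  set m := ∑ i, (k i - 1) with hm_def
  set N := Nat.nth Nat.Prime (m - 1) with hN_def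
  have hm : c ≤ m := by
    calc c = ∑ _i : Fin c, 1 := by simp
    _ ≤ m := Finset.sum_le_sum fun i _ => by have := hk i; omega
  have hm1 : 1 ≤ m := le_trans hc hm
  have hN2 : 2 ≤ N := (Nat.prime_nth_prime (m - 1)).two_le
  constructor
  · -- membership: every coloring of [1, N] works
    intro χ
    set T : Finset ℕ := insert 1 ((range m).image (Nat.nth Nat.Prime)) with hT_def
    have hT1 : (1 : ℕ) ∉ (range m).image (Nat.nth Nat.Prime) := by
      simp only [mem_image, mem_range, not_exists]
      intro j _
      have := (Nat.prime_nth_prime j).two_le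
      omega
    have hTcard : T.card = m + 1 := by
      rw [hT_def, card_insert_of_notMem hT1,
        card_image_of_injective _ nth_prime_strictMono.injective, card_range]
    have hTmem : ∀ x ∈ T, x = 1 ∨ (x.Prime ∧ x ≤ N) := by
      intro x hx
      rw [hT_def, mem_insert] at hx
      rcases hx with h | h
      · exact Or.inl h
      · simp only [mem_image, mem_range] at h
        obtain ⟨j, hj, rfl⟩ := h
        refine Or.inr ⟨Nat.prime_nth_prime j, ?_⟩
        exact nth_prime_strictMono.monotone (by omega)
    have hTsub : ↑T ⊆ Set.Icc 1 N := by
      intro x hx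
      rcases hTmem x hx with rfl | ⟨hp, hle⟩
      · exact ⟨le_refl 1, by omega⟩
      · exact ⟨hp.one_lt.le, hle⟩
    have hTcop : (↑T : Set ℕ).Pairwise Nat.Coprime := by
      intro x hx y hy hne
      rcases hTmem x hx with rfl | ⟨hpx, _⟩
      · exact Nat.coprime_one_left _
      · rcases hTmem y hy with rfl | ⟨hpy, _⟩
        · exact Nat.coprime_one_right _
        · exact (Nat.coprime_primes hpx hpy).mpr hne
    have hsum : T.card = ∑ i : Fin c, (T.filter fun a => χ a = i).card :=
      card_eq_sum_card_fiberwise (fun x _ => mem_univ (χ x))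
    have hex : ∃ i, k i ≤ (T.filter fun a => χ a = i).card := by
      by_contra h
      push_neg at h
      have hle : ∑ i : Fin c, (T.filter fun a => χ a = i).card ≤ ∑ i, (k i - 1) :=
        Finset.sum_le_sum fun i _ => by have := h i; omega
      rw [← hsum, hTcard, ← hm_def] at hle
      omega
    obtain ⟨i, hi⟩ := hex
    obtain ⟨S, hSsub, hScard⟩ := Finset.exists_subset_card_eq hi
    refine ⟨i, S, ?_, ?_, ?_, hScard⟩
    · intro x hx
      exact hTsub (Finset.filter_subset _ _ (hSsub hx))
    · intro a ha
      exact (Finset.mem_filter.mp (hSsub ha)).2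
    · exact hTcop.mono (fun x hx => Finset.filter_subset _ _ (hSsub hx))
  · -- lower bound
    intro n hn
    by_contra hcon
    push_neg at hcon
    -- hcon : n < N
    set b : ℕ → ℕ := fun t => ∑ j ∈ univ.filter (fun j : Fin c => (j : ℕ) < t), (k j - 1)
      with hb_def
    have hbmono : Monotone b := by
      intro a a' ha
      exact Finset.sum_le_sum_of_subset
        (Finset.monotone_filter_right _ (fun j _ hj => lt_of_lt_of_le hj ha))
    have hbc : b c = m := by
      rw [hb_def, hm_def]
      simp only
      congr 1
      apply Finset.filter_true_of_mem
      intro j _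
      exact j.isLt
    have hb0 : b 0 = 0 := by
      rw [hb_def]
      simp
    have hbsucc : ∀ i : Fin c, b ((i : ℕ) + 1) = b (i : ℕ) + (k i - 1) := by
      intro i
      have hset : univ.filter (fun j : Fin c => (j : ℕ) < (i : ℕ) + 1)
          = insert i (univ.filter (fun j : Fin c => (j : ℕ) < (i : ℕ))) := by
        ext j
        simp only [mem_filter, mem_univ, true_and, mem_insert, Fin.ext_iff]
        omega
      rw [hb_def]
      simp only
      rw [hset, Finset.sum_insert (by simp)]
      ring
    have hfind : ∀ t : ℕ, ∃ j, t < b (j + 1) ∨ c ≤ j + 1 := fun t => ⟨c, Or.inr (by omega)⟩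
    set ψ : ℕ → Fin c := fun t => ⟨min (Nat.find (hfind t)) (c - 1), by omega⟩ with hψ_def
    have hψspec : ∀ t, t < m → b (ψ t : ℕ) ≤ t ∧ t < b ((ψ t : ℕ) + 1) := by
      intro t ht
      have hle : Nat.find (hfind t) ≤ c - 1 := Nat.find_le (Or.inr (by omega))
      have hval : (ψ t : ℕ) = Nat.find (hfind t) := by
        rw [hψ_def]
        simp [Nat.min_eq_left hle]
      rw [hval]
      constructor
      · rcases Nat.eq_zero_or_pos (Nat.find (hfind t)) with h0 | hpos
        · rw [h0, hb0]; omega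
        · obtain ⟨f, hf⟩ : ∃ f, Nat.find (hfind t) = f + 1 := ⟨_, (Nat.succ_pred_eq_of_pos hpos).symm⟩
          have hmin := Nat.find_min (hfind t) (m := f) (by omega)
          push_neg at hmin
          rw [hf]
          exact hmin.1
      · rcases Nat.find_spec (hfind t) with h | h
        · exact h
        · have : Nat.find (hfind t) = c - 1 := by omega
          rw [this]
          have : c - 1 + 1 = c := by omega
          rw [this, hbc]
          exact ht
    set e : ℕ → ℕ := fun x => if x ≤ 1 then 0 else Nat.count Nat.Prime x.minFac + 1 with he_def
    obtain ⟨i, S, hS1, hS2, hS3, hS4⟩ := hn (fun x => ψ (e x))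
    have hSx : ∀ x ∈ S, 1 ≤ x ∧ x < N := by
      intro x hx
      have := hS1 hx
      rw [Set.mem_Icc] at this
      exact ⟨this.1, lt_of_le_of_lt this.2 hcon⟩
    have hem : ∀ x ∈ S, e x < m := by
      intro x hx
      obtain ⟨hx1, hxN⟩ := hSx x hx
      rw [he_def]
      by_cases h1 : x ≤ 1
      · simp [h1]; omega
      · simp only [h1, if_false]
        push_neg at h1
        have hpf : x.minFac.Prime := Nat.minFac_prime (by omega)
        have hle : x.minFac ≤ x := Nat.minFac_le (by omega)
        have : Nat.count Nat.Prime x.minFac < m - 1 :=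
          count_lt_of_lt_nth hpf (by rw [← hN_def]; omega)
        omega
    have hrange : ∀ x ∈ S, e x ∈ Finset.Ico (b (i : ℕ)) (b ((i : ℕ) + 1)) := by
      intro x hx
      have hχ : ψ (e x) = i := hS2 x hx
      have := hψspec (e x) (hem x hx)
      rw [hχ] at this
      rw [Finset.mem_Ico]
      exact this
    have hinj : Set.InjOn e ↑S := by
      intro x hx y hy hxy
      by_contra hne
      have hcop := hS3 hx hy hne
      have hx1 := (hSx x (Finset.mem_coe.mp hx)).1
      have hy1 := (hSx y (Finset.mem_coe.mp hy)).1
      rw [he_def] at hxy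
      simp only at hxy
      by_cases h1 : x ≤ 1
      · by_cases h2 : y ≤ 1
        · omega
        · rw [if_pos h1, if_neg h2] at hxy; omega
      · by_cases h2 : y ≤ 1
        · rw [if_neg h1, if_pos h2] at hxy; omega
        · rw [if_neg h1, if_neg h2] at hxy
          push_neg at h1 h2
          have hpx : x.minFac.Prime := Nat.minFac_prime (by omega)
          have hpy : y.minFac.Prime := Nat.minFac_prime (by omega)
          have heq : x.minFac = y.minFac := by
            have h3 : Nat.count Nat.Prime x.minFac = Nat.count Nat.Prime y.minFac := by omega
            have := Nat.nth_count hpx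
            rw [h3, Nat.nth_count hpy] at this
            exact this.symm
          have hdvd : x.minFac ∣ Nat.gcd x y :=
            Nat.dvd_gcd (Nat.minFac_dvd x) (heq ▸ Nat.minFac_dvd y)
          rw [Nat.Coprime] at hcop
          rw [hcop] at hdvd
          have := Nat.le_of_dvd one_pos hdvd
          have := hpx.two_le
          omega
    have hcard : S.card ≤ (Finset.Ico (b (i : ℕ)) (b ((i : ℕ) + 1))).card :=
      Finset.card_le_card_of_injOn e hrange hinj
    rw [Nat.card_Ico, hbsucc i] at hcard
    have := hk i
    omega

/-- Diagonal and off-diagonal forms: `R_cop(k; c) = p_{c(k-1)}` and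
`R_cop(s, t) = p_{s+t-2}` (primes 1-indexed via `Nat.nth Nat.Prime (m - 1)`). -/
theorem vertex_coprime_ramsey_diagonal_offdiagonal (k c s t : ℕ)
    (hk : 2 ≤ k) (hc : 2 ≤ c) (hs : 2 ≤ s) (ht : 2 ≤ t) :
    IsLeast {n : ℕ | ∀ χ : ℕ → Fin c, ∃ i : Fin c, ∃ S : Finset ℕ,
        ↑S ⊆ Set.Icc 1 n ∧ (∀ a ∈ S, χ a = i) ∧
        (S : Set ℕ).Pairwise Nat.Coprime ∧ S.card = k}
      (Nat.nth Nat.Prime (c * (k - 1) - 1)) ∧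
    IsLeast {n : ℕ | ∀ χ : ℕ → Fin 2, ∃ i : Fin 2, ∃ S : Finset ℕ,
        ↑S ⊆ Set.Icc 1 n ∧ (∀ a ∈ S, χ a = i) ∧
        (S : Set ℕ).Pairwise Nat.Coprime ∧ S.card = (if i = 0 then s else t)}
      (Nat.nth Nat.Prime (s + t - 2 - 1)) := by
  constructor
  · have h := cop_general (c := c) (by omega) (fun _ => k) (fun _ => hk)
    have hsum : (∑ _i : Fin c, (k - 1)) = c * (k - 1) := by
      simp [Finset.sum_const, Finset.card_univ, mul_comm]
    rw [hsum] at h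
    exact h
  · have h := cop_general (c := 2) (by omega) (fun i => if i = 0 then s else t)
      (fun i => by split <;> omega)
    have hsum : (∑ i : Fin 2, ((if i = 0 then s else t) - 1)) = s + t - 2 := by
      rw [Fin.sum_univ_two]
      simp
      omega
    rw [hsum] at h
    exact h
end

section
/- Let A be a finite set of atoms with |A| = r, and let H be a graph whose vertices carry supports σ(v) ⊆ A, with adjacency given by support disjointness, such that every singleton {a} occurs as a support and exactly one vertex has empty support. For mixed demands k_1,...,k_c ≥ 2 with M = Σ(k_i−1), every c-coloring of the vertices forces a monochromatic k_i-clique in some color i if and only if r ≥ M. -/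
/-- Support-disjointness Ramsey theorem, one-universal case: atoms `A` with `|A| = r`,
supports `σ v ⊆ A`, adjacency = support disjointness, every singleton occurs as a
support and exactly one vertex has empty support.  For demands `k i ≥ 2` with
`M = ∑ (k i - 1)`, every `c`-coloring forces a monochromatic `k i`-clique in some
color iff `r ≥ M`. -/
theorem support_disjointness_ramsey_one_universal {α V : Type*} [DecidableEq V]
    (A : Finset α) (r : ℕ) (hr : A.card = r) (σ : V → Finset α)
    (hσA : ∀ v, σ v ⊆ A) (hsing : ∀ a ∈ A, ∃ v, σ v = {a})
    (huniv : ∃! v, σ v = ∅)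
    (c : ℕ) (hc : 1 ≤ c) (k : Fin c → ℕ) (hk : ∀ i, 2 ≤ k i) :
    (∀ χ : V → Fin c, ∃ i : Fin c, ∃ S : Finset V, S.card = k i ∧
      (∀ v ∈ S, χ v = i) ∧
      (S : Set V).Pairwise fun u v => Disjoint (σ u) (σ v)) ↔
    ∑ i, (k i - 1) ≤ r := by
  classical
  obtain ⟨v₀, hv₀, hv₀u⟩ := huniv
  constructor
  · intro hforce
    by_contra hlt
    push_neg at hlt
    set i₁ : Fin c := ⟨0, hc⟩ with hi₁
    set cap : Fin c → ℕ := fun i => if i = i₁ then k i - 2 else k i - 1 with hcap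
    set cap' : ℕ → ℕ := fun n => if h : n < c then cap ⟨n, h⟩ else 0 with hcap'
    set T : ℕ → ℕ := fun n => ∑ j ∈ Finset.range n, cap' j with hT
    have hT0 : T 0 = 0 := by simp [hT]
    have hTsucc : ∀ n, T (n + 1) = T n + cap' n := by
      intro n; simp [hT, Finset.sum_range_succ]
    have hTc : T c = ∑ i, cap i := by
      show ∑ j ∈ Finset.range c, cap' j = _
      rw [← Fin.sum_univ_eq_sum_range cap' c]
      refine Finset.sum_congr rfl fun i _ => ?_
      simp [hcap', i.isLt]
    have hcapsum : ∑ i, cap i + 1 = ∑ i, (k i - 1) := by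
      have h2 := hk i₁
      have he : ∀ j ∈ Finset.univ.erase i₁, cap j = k j - 1 := by
        intro j hj; simp [hcap, (Finset.mem_erase.mp hj).1]
      have e1 : ∑ j ∈ Finset.univ.erase i₁, cap j
          = ∑ j ∈ Finset.univ.erase i₁, (k j - 1) := Finset.sum_congr rfl he
      have e2 : ∑ j ∈ Finset.univ.erase i₁, cap j + cap i₁ = ∑ i, cap i :=
        Finset.sum_erase_add _ _ (Finset.mem_univ i₁)
      have e3 : ∑ j ∈ Finset.univ.erase i₁, (k j - 1) + (k i₁ - 1) = ∑ i, (k i - 1) :=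
        Finset.sum_erase_add _ _ (Finset.mem_univ i₁)
      have e4 : cap i₁ = k i₁ - 2 := by simp [hcap]
      omega
    have hrT : r ≤ T c := by rw [hTc]; omega
    -- the coloring of atom positions
    set e := A.equivFin with he
    have hcol : ∀ p, p < T c → ∃ i : Fin c, T i.1 ≤ p ∧ p < T (i.1 + 1) := by
      intro p hp
      have hex : ∃ n, p < T n := ⟨c, hp⟩
      set n := Nat.find hex with hn
      have hns : p < T n := Nat.find_spec hex
      have hnc : n ≤ c := Nat.find_min' hex hp
      have hn0 : n ≠ 0 := by
        intro h; rw [h, hT0] at hns; omega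
      refine ⟨⟨n - 1, by omega⟩, ?_, ?_⟩
      · by_contra h
        push_neg at h
        exact absurd h (by simpa using Nat.find_min hex (m := n - 1) (by omega))
      · simpa using (by omega : n - 1 + 1 = n) ▸ hns
    set col : ℕ → Fin c := fun p =>
      if h : p < T c then (hcol p h).choose else i₁ with hcolv
    have hcolspec : ∀ p (h : p < T c), T (col p).1 ≤ p ∧ p < T ((col p).1 + 1) := by
      intro p h
      simp only [hcolv, dif_pos h]
      exact (hcol p h).choose_spec
    set f : α → Fin c := fun a =>
      if ha : a ∈ A then col ((e ⟨a, ha⟩ : Fin A.card) : ℕ) else i₁ with hf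
    set χ : V → Fin c := fun v =>
      if h : (σ v).Nonempty then f h.choose else i₁ with hχ
    have hχ₀ : χ v₀ = i₁ := by
      simp [hχ, hv₀]
    set m : V → ℕ := fun v =>
      if h : (σ v).Nonempty then ((e ⟨h.choose, hσA v h.choose_spec⟩ : Fin A.card) : ℕ)
      else 0 with hm
    obtain ⟨i, S, hScard, hScol, hSpair⟩ := hforce χ
    -- erase v₀; remaining vertices have nonempty supports with chosen atoms
    have hkey : ∀ v ∈ S.erase v₀, (σ v).Nonempty := by
      intro v hv
      rcases Finset.eq_empty_or_nonempty (σ v) with h | h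
      · exact absurd (hv₀u v h) (Finset.mem_erase.mp hv).1
      · exact h
    have hmem : ∀ v ∈ S.erase v₀, m v ∈ Finset.Ico (T i.1) (T (i.1 + 1)) := by
      intro v hv
      have hne := hkey v hv
      have hχv : χ v = i := hScol v (Finset.mem_of_mem_erase hv)
      rw [hχ] at hχv
      simp only [dif_pos hne] at hχv
      rw [hf] at hχv
      have haA : hne.choose ∈ A := hσA v hne.choose_spec
      simp only [dif_pos haA] at hχv
      have hp : ((e ⟨hne.choose, haA⟩ : Fin A.card) : ℕ) < T c := by
        have := (e ⟨hne.choose, haA⟩).isLt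
        omega
      have := hcolspec _ hp
      rw [hχv] at this
      simp only [hm, dif_pos hne]
      exact Finset.mem_Ico.mpr this
    have hinj : Set.InjOn m (S.erase v₀) := by
      intro u hu v hv huv
      have hnu := hkey u hu
      have hnv := hkey v hv
      simp only [hm, dif_pos hnu, dif_pos hnv] at huv
      have : hnu.choose = hnv.choose := by
        have := e.injective (Fin.ext huv)
        exact Subtype.ext_iff.mp this
      by_contra hne
      have hdis := hSpair (Finset.mem_coe.mpr (Finset.mem_of_mem_erase hu))
        (Finset.mem_coe.mpr (Finset.mem_of_mem_erase hv)) hne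
      exact (Finset.disjoint_left.mp hdis hnu.choose_spec) (this ▸ hnv.choose_spec)
    have hcount : (S.erase v₀).card ≤ cap i := by
      have h1 := Finset.card_le_card_of_injOn m hmem hinj
      rw [Nat.card_Ico, hTsucc] at h1
      have : cap' i.1 = cap i := by simp [hcap', i.isLt]
      omega
    have h2 := hk i
    by_cases hii : i = i₁
    · have : cap i = k i - 2 := by simp [hcap, hii]
      have h3 : S.card ≤ (S.erase v₀).card + 1 := by
        by_cases hv : v₀ ∈ S
        · rw [Finset.card_erase_of_mem hv]; omega
        · rw [Finset.erase_eq_of_notMem hv]; omega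
      omega
    · have : cap i = k i - 1 := by simp [hcap, hii]
      have hv : v₀ ∉ S := by
        intro hv
        exact hii ((hScol v₀ hv).symm.trans hχ₀)
      rw [Finset.erase_eq_of_notMem hv] at hcount
      omega
  · intro hM χ
    set g : α → V := fun a => if h : a ∈ A then (hsing a h).choose else v₀ with hg
    have hgσ : ∀ a ∈ A, σ (g a) = {a} := fun a ha => by
      simp only [hg, dif_pos ha]; exact (hsing a ha).choose_spec
    set Ai : Fin c → Finset α := fun i => A.filter (fun a => χ (g a) = i) with hAi
    have hAisub : ∀ i, Ai i ⊆ A := fun i => Finset.filter_subset _ _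
    have hginj : ∀ s : Finset α, s ⊆ A → Set.InjOn g s := by
      intro s hs a ha b hb hab
      have : ({a} : Finset α) = {b} := by
        rw [← hgσ a (hs ha), ← hgσ b (hs hb), hab]
      exact Finset.singleton_injective this
    have hgne : ∀ a ∈ A, g a ≠ v₀ := by
      intro a ha h
      have := hgσ a ha
      rw [h, hv₀] at this
      exact Finset.singleton_ne_empty a this.symm
    have hpair : ∀ s : Finset α, s ⊆ A →
        ((insert v₀ (s.image g) : Finset V) : Set V).Pairwise
          fun u v => Disjoint (σ u) (σ v) := by
      intro s hs u hu v hv huv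
      simp only [Finset.coe_insert, Set.mem_insert_iff, Finset.coe_image,
        Set.mem_image, Finset.mem_coe] at hu hv
      rcases hu with rfl | ⟨a, ha, rfl⟩
      · rw [hv₀]; exact Finset.disjoint_empty_left _
      rcases hv with rfl | ⟨b, hb, rfl⟩
      · rw [hv₀]; exact Finset.disjoint_empty_right _
      rw [hgσ a (hs ha), hgσ b (hs hb), Finset.disjoint_singleton]
      intro hab
      exact huv (by rw [hab])
    by_cases hbig : ∃ i, k i ≤ (Ai i).card
    · obtain ⟨i, hi⟩ := hbig
      obtain ⟨T, hTsub, hTcard⟩ := Finset.exists_subset_card_eq hi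
      refine ⟨i, T.image g, ?_, ?_, ?_⟩
      · rw [Finset.card_image_of_injOn (hginj T (hTsub.trans (hAisub i))), hTcard]
      · intro v hv
        obtain ⟨a, ha, rfl⟩ := Finset.mem_image.mp hv
        exact (Finset.mem_filter.mp (hTsub ha)).2
      · have := hpair T (hTsub.trans (hAisub i))
        intro u hu v hv huv
        exact this (by simp only [Finset.coe_insert, Set.mem_insert_iff]; right; exact hu)
          (by simp only [Finset.coe_insert, Set.mem_insert_iff]; right; exact hv) huv
    · push_neg at hbig
      have hsum : ∑ i, (Ai i).card = r := by
        rw [← hr]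
        exact (Finset.card_eq_sum_card_fiberwise
          (f := fun a => χ (g a)) (fun a _ => Finset.mem_univ _)).symm
      have hle : ∀ i ∈ Finset.univ, (Ai i).card ≤ k i - 1 :=
        fun i _ => Nat.le_sub_one_of_lt (hbig i)
      have heq : ∑ i, (Ai i).card = ∑ i, (k i - 1) :=
        le_antisymm (Finset.sum_le_sum hle) (by omega)
      have hall := (Finset.sum_eq_sum_iff_of_le hle).mp heq
      set i₀ := χ v₀ with hi₀
      have hcard : (Ai i₀).card = k i₀ - 1 := hall i₀ (Finset.mem_univ _)
      refine ⟨i₀, insert v₀ ((Ai i₀).image g), ?_, ?_, hpair _ (hAisub i₀)⟩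
      · rw [Finset.card_insert_of_notMem, Finset.card_image_of_injOn
          (hginj _ (hAisub i₀)), hcard]
        · have := hk i₀; omega
        · intro h
          obtain ⟨a, ha, hga⟩ := Finset.mem_image.mp h
          exact hgne a (hAisub i₀ ha) hga
      · intro v hv
        rcases Finset.mem_insert.mp hv with rfl | hv'
        · rfl
        · obtain ⟨a, ha, rfl⟩ := Finset.mem_image.mp hv'
          exact (Finset.mem_filter.mp ha).2
end

section
/- Let A be a finite set of atoms with |A| = r, and let H be a support-disjointness graph in which every singleton support occurs and every vertex has nonempty support. For mixed demands k_1,...,k_c ≥ 2 with M = Σ(k_i−1), every c-coloring forces a monochromatic k_i-clique in some color i if and only if r ≥ M + 1. -/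
/-- Auxiliary: any finset of size at most `∑ n i` can be colored with fibers of
size at most `n i`. -/
lemma sdr_exists_coloring {α : Type*} (c : ℕ) (hc : 1 ≤ c) (n : Fin c → ℕ) :
    ∀ s : Finset α, s.card ≤ ∑ i, n i →
      ∃ f : α → Fin c, ∀ i, (s.filter fun a => f a = i).card ≤ n i := by
  classical
  intro s
  induction s using Finset.induction_on with
  | empty => exact fun _ => ⟨fun _ => ⟨0, hc⟩, fun i => by simp⟩
  | insert _ _ ha ih =>
    rename_i a s
    intro hs
    rw [Finset.card_insert_of_notMem ha] at hs
    obtain ⟨f, hf⟩ := ih (by omega)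
    have hsum : ∑ i, (s.filter fun a => f a = i).card = s.card :=
      (Finset.card_eq_sum_card_fiberwise (fun a _ => Finset.mem_univ (f a))).symm
    have hex : ∃ i, (s.filter fun a => f a = i).card < n i := by
      by_contra hcon
      push_neg at hcon
      have : ∑ i, n i ≤ ∑ i, (s.filter fun a => f a = i).card :=
        Finset.sum_le_sum fun i _ => hcon i
      omega
    obtain ⟨i, hi⟩ := hex
    refine ⟨Function.update f a i, fun j => ?_⟩
    have hfs : (s.filter fun x => Function.update f a i x = j)
        = s.filter fun x => f x = j := by
      apply Finset.filter_congr
      intro x hx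
      rw [Function.update_of_ne (by rintro rfl; exact ha hx)]
    rw [Finset.filter_insert]
    by_cases hji : j = i
    · subst hji
      rw [if_pos (Function.update_self a j f)]
      rw [Finset.card_insert_of_notMem (by simp [ha]), hfs]
      omega
    · rw [if_neg (by simp [Function.update_self]; exact fun h => hji h.symm), hfs]
      exact hf j

/-- Support-disjointness Ramsey theorem, no-universal case: every singleton support
occurs and every vertex has nonempty support; forcing holds iff `r ≥ M + 1`. -/
theorem support_disjointness_ramsey_no_universal {α V : Type*} [DecidableEq V]
    (A : Finset α) (r : ℕ) (hr : A.card = r) (σ : V → Finset α)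
    (hσA : ∀ v, σ v ⊆ A) (hsing : ∀ a ∈ A, ∃ v, σ v = {a})
    (hne : ∀ v, (σ v).Nonempty)
    (c : ℕ) (hc : 1 ≤ c) (k : Fin c → ℕ) (hk : ∀ i, 2 ≤ k i) :
    (∀ χ : V → Fin c, ∃ i : Fin c, ∃ S : Finset V, S.card = k i ∧
      (∀ v ∈ S, χ v = i) ∧
      (S : Set V).Pairwise fun u v => Disjoint (σ u) (σ v)) ↔
    ∑ i, (k i - 1) + 1 ≤ r := by
  classical
  constructor
  · intro h
    by_contra hcon
    push_neg at hcon
    have hAc : A.card ≤ ∑ i, (k i - 1) := by omega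
    obtain ⟨f, hf⟩ := sdr_exists_coloring c hc (fun i => k i - 1) A hAc
    set χ : V → Fin c := fun v => f (hne v).choose with hχ
    obtain ⟨i, S, hScard, hScol, hSdisj⟩ := h χ
    have hmap : ∀ v ∈ S, (hne v).choose ∈ A.filter fun a => f a = i := by
      intro v hv
      refine Finset.mem_filter.mpr ⟨hσA v (hne v).choose_spec, hScol v hv⟩
    have hinj : Set.InjOn (fun v => (hne v).choose) S := by
      intro u hu v hv huv
      by_contra hne'
      have huv' : (hne u).choose = (hne v).choose := huv
      have hmem : (hne u).choose ∈ σ v := by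
        rw [huv']; exact (hne v).choose_spec
      exact Finset.disjoint_left.mp (hSdisj hu hv hne') (hne u).choose_spec hmem
    have hle := Finset.card_le_card_of_injOn _ hmap hinj
    have := hf i
    have := hk i
    omega
  · intro hM χ
    choose g hg using hsing
    set f : {a // a ∈ A} → V := fun a => g a.1 a.2 with hfdef
    have hfσ : ∀ a : {a // a ∈ A}, σ (f a) = {a.1} := fun a => hg a.1 a.2
    have hsum : ∑ i, (A.attach.filter fun a => χ (f a) = i).card = A.attach.card :=
      (Finset.card_eq_sum_card_fiberwise (fun a _ => Finset.mem_univ (χ (f a)))).symm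
    have hex : ∃ i, k i ≤ (A.attach.filter fun a => χ (f a) = i).card := by
      by_contra hcon
      push_neg at hcon
      have h1 : ∑ i, (A.attach.filter fun a => χ (f a) = i).card
          ≤ ∑ i, (k i - 1) :=
        Finset.sum_le_sum fun i _ => by have := hcon i; omega
      have h2 : A.attach.card = r := by rw [Finset.card_attach, hr]
      omega
    obtain ⟨i, hi⟩ := hex
    obtain ⟨T, hTsub, hTcard⟩ := Finset.exists_subset_card_eq hi
    have hfinj : Set.InjOn f T := by
      intro a _ b _ hab
      have : ({a.1} : Finset α) = {b.1} := by rw [← hfσ a, ← hfσ b, hab]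
      exact Subtype.ext (Finset.singleton_injective this)
    refine ⟨i, T.image f, ?_, ?_, ?_⟩
    · rw [Finset.card_image_of_injOn hfinj, hTcard]
    · intro v hv
      obtain ⟨a, ha, rfl⟩ := Finset.mem_image.mp hv
      exact (Finset.mem_filter.mp (hTsub ha)).2
    · intro u hu v hv huv
      obtain ⟨a, _, rfl⟩ := Finset.mem_image.mp (Finset.mem_coe.mp hu)
      obtain ⟨b, _, rfl⟩ := Finset.mem_image.mp (Finset.mem_coe.mp hv)
      rw [hfσ a, hfσ b]
      simp only [Finset.disjoint_singleton]
      intro hab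
      exact huv (congrArg f (Subtype.ext hab))
end

section
/- For all k_1,...,k_c ≥ 2, the edge-coloring coprime Ramsey number satisfies R_cop^edge(k_1,...,k_c) = p_{R−1}, where R = R_cl(k_1,...,k_c) is the classical multicolor Ramsey number for complete graphs. -/
/-- Edge-coprime Ramsey reduction: `R_cop^edge(k_1,...,k_c) = p_{R-1}` where
`R = R_cl(k_1,...,k_c)` is the classical multicolor complete-graph Ramsey number
(primes 1-indexed, so `p_{R-1} = Nat.nth Nat.Prime (R - 2)`). -/
theorem edge_coprime_ramsey_reduction (c : ℕ) (hc : 1 ≤ c) (k : Fin c → ℕ)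
    (hk : ∀ i, 2 ≤ k i) (R : ℕ)
    (hR : IsLeast {N : ℕ | ∀ χ : Sym2 ℕ → Fin c, ∃ i : Fin c, ∃ S : Finset ℕ,
      ↑S ⊆ Set.Icc 1 N ∧ S.card = k i ∧
      ∀ a ∈ S, ∀ b ∈ S, a ≠ b → χ s(a, b) = i} R) :
    IsLeast {n : ℕ | ∀ χ : Sym2 ℕ → Fin c, ∃ i : Fin c, ∃ S : Finset ℕ,
      ↑S ⊆ Set.Icc 1 n ∧ S.card = k i ∧ (S : Set ℕ).Pairwise Nat.Coprime ∧
      ∀ a ∈ S, ∀ b ∈ S, a ≠ b → χ s(a, b) = i}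
    (Nat.nth Nat.Prime (R - 2)) := by
  classical
  obtain ⟨hR1, hR2⟩ := hR
  set P : ℕ → ℕ := Nat.nth Nat.Prime with hPdef
  have hPprime : ∀ m, (P m).Prime := fun m => Nat.prime_nth_prime m
  have hPmono : StrictMono P := Nat.nth_strictMono Nat.infinite_setOf_prime
  -- R ≥ 2
  have hR2le : 2 ≤ R := by
    obtain ⟨i, S, hSsub, hScard, -⟩ := hR1 (fun _ => ⟨0, hc⟩)
    have hsub : S ⊆ Finset.Icc 1 R := by
      intro x hx
      have := hSsub hx
      simpa [Finset.mem_Icc] using this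
    have h1 := Finset.card_le_card hsub
    have h2 := hk i
    rw [hScard] at h1
    simp [Nat.card_Icc] at h1
    omega
  constructor
  · -- membership: coprime Ramsey holds at n = P (R - 2)
    intro χ
    set f : ℕ → ℕ := fun j => if j ≤ 1 then 1 else P (j - 2) with hfdef
    obtain ⟨i, S, hSsub, hScard, hmono⟩ := hR1 (fun e => χ (e.map f))
    have hSmem : ∀ a ∈ S, 1 ≤ a ∧ a ≤ R := by
      intro a ha
      have := hSsub ha
      simpa [Set.mem_Icc] using this
    -- injectivity of f on S
    have hinj : ∀ a ∈ S, ∀ b ∈ S, a ≠ b → f a ≠ f b := by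
      intro a ha b hb hab
      have ha' := hSmem a ha
      have hb' := hSmem b hb
      simp only [hfdef]
      rcases le_or_gt a 1 with h1 | h1 <;> rcases le_or_gt b 1 with h2 | h2
      · omega
      · simp only [if_pos h1, if_neg (by omega : ¬ b ≤ 1)]
        have := (hPprime (b - 2)).two_le
        omega
      · simp only [if_neg (by omega : ¬ a ≤ 1), if_pos h2]
        have := (hPprime (a - 2)).two_le
        omega
      · simp only [if_neg (by omega : ¬ a ≤ 1), if_neg (by omega : ¬ b ≤ 1)]
        intro h
        have := hPmono.injective h
        omega
    refine ⟨i, S.image f, ?_, ?_, ?_, ?_⟩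
    · -- image is in [1, P (R-2)]
      intro x hx
      simp only [Finset.coe_image, Set.mem_image, Finset.mem_coe] at hx
      obtain ⟨a, ha, rfl⟩ := hx
      have ha' := hSmem a ha
      simp only [hfdef]
      rcases le_or_gt a 1 with h1 | h1
      · simp only [if_pos h1, Set.mem_Icc]
        exact ⟨le_refl 1, Nat.one_le_iff_ne_zero.mpr (hPprime (R - 2)).pos.ne'⟩
      · simp only [if_neg (by omega : ¬ a ≤ 1), Set.mem_Icc]
        constructor
        · exact (hPprime (a - 2)).one_lt.le
        · exact hPmono.monotone (by omega : a - 2 ≤ R - 2)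
    · rw [Finset.card_image_of_injOn, hScard]
      intro a ha b hb hab
      by_contra h
      exact hinj a ha b hb h hab
    · -- pairwise coprime
      intro x hx y hy hxy
      simp only [Finset.coe_image, Set.mem_image, Finset.mem_coe] at hx hy
      obtain ⟨a, ha, rfl⟩ := hx
      obtain ⟨b, hb, rfl⟩ := hy
      simp only [hfdef] at hxy ⊢
      rcases le_or_gt a 1 with h1 | h1 <;> rcases le_or_gt b 1 with h2 | h2
      · simp [if_pos h1, if_pos h2] at hxy
      · simp only [if_pos h1]
        exact Nat.coprime_one_left _
      · simp only [if_pos h2]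
        exact Nat.coprime_one_right _
      · simp only [if_neg (by omega : ¬ a ≤ 1), if_neg (by omega : ¬ b ≤ 1)] at hxy ⊢
        exact (Nat.coprime_primes (hPprime _) (hPprime _)).mpr hxy
    · -- monochromatic
      intro x hx y hy hxy
      simp only [Finset.mem_image] at hx hy
      obtain ⟨a, ha, rfl⟩ := hx
      obtain ⟨b, hb, rfl⟩ := hy
      have hab : a ≠ b := by rintro rfl; exact hxy rfl
      have := hmono a ha b hb hab
      simpa [Sym2.map_pair_eq] using this
  · -- lower bound
    intro n hn
    by_contra hcon
    push_neg at hcon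
    -- n < P (R - 2)
    have hnot : ¬ (∀ χ : Sym2 ℕ → Fin c, ∃ i : Fin c, ∃ S : Finset ℕ,
        ↑S ⊆ Set.Icc 1 (R - 1) ∧ S.card = k i ∧
        ∀ a ∈ S, ∀ b ∈ S, a ≠ b → χ s(a, b) = i) := by
      intro h
      have := hR2 h
      omega
    obtain ⟨χ₀, hχ₀⟩ := not_forall.mp hnot
    set g : ℕ → ℕ := fun m => if m ≤ 1 then 1 else Nat.count Nat.Prime (Nat.minFac m) + 2
      with hgdef
    obtain ⟨i, S, hSsub, hScard, hScop, hmono⟩ := hn (fun e => χ₀ (e.map g))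
    have hSmem : ∀ a ∈ S, 1 ≤ a ∧ a ≤ n := by
      intro a ha
      have := hSsub ha
      simpa [Set.mem_Icc] using this
    -- key: for m > 1 in S, count Prime (minFac m) < R - 2
    have hkey : ∀ m ∈ S, 1 < m → Nat.count Nat.Prime (Nat.minFac m) < R - 2 := by
      intro m hm h1
      have hm' := hSmem m hm
      have hp : (Nat.minFac m).Prime := Nat.minFac_prime (by omega)
      have hPc : P (Nat.count Nat.Prime (Nat.minFac m)) = Nat.minFac m :=
        Nat.nth_count hp
      have hle : Nat.minFac m ≤ n := le_trans (Nat.minFac_le (by omega)) hm'.2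
      have : P (Nat.count Nat.Prime (Nat.minFac m)) < P (R - 2) := by omega
      exact hPmono.lt_iff_lt.mp this
    -- g maps S into [1, R-1]
    have hrange : ∀ m ∈ S, 1 ≤ g m ∧ g m ≤ R - 1 := by
      intro m hm
      simp only [hgdef]
      rcases le_or_gt m 1 with h1 | h1
      · simp only [if_pos h1]; omega
      · simp only [if_neg (by omega : ¬ m ≤ 1)]
        have := hkey m hm h1
        omega
    -- g injective on S
    have hinj : ∀ a ∈ S, ∀ b ∈ S, a ≠ b → g a ≠ g b := by
      intro a ha b hb hab
      have hcop := hScop (Finset.mem_coe.mpr ha) (Finset.mem_coe.mpr hb) hab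
      have ha' := hSmem a ha
      have hb' := hSmem b hb
      simp only [hgdef]
      rcases le_or_gt a 1 with h1 | h1 <;> rcases le_or_gt b 1 with h2 | h2
      · omega
      · simp only [if_pos h1, if_neg (by omega : ¬ b ≤ 1)]; omega
      · simp only [if_neg (by omega : ¬ a ≤ 1), if_pos h2]; omega
      · simp only [if_neg (by omega : ¬ a ≤ 1), if_neg (by omega : ¬ b ≤ 1)]
        intro h
        have hpa : (Nat.minFac a).Prime := Nat.minFac_prime (by omega)
        have hpb : (Nat.minFac b).Prime := Nat.minFac_prime (by omega)
        have hcount : Nat.count Nat.Prime (Nat.minFac a)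
            = Nat.count Nat.Prime (Nat.minFac b) := by omega
        have heq : Nat.minFac a = Nat.minFac b := by
          rw [← Nat.nth_count hpa, ← Nat.nth_count hpb, hcount]
        have hdvd : Nat.minFac a ∣ Nat.gcd a b :=
          Nat.dvd_gcd (Nat.minFac_dvd a) (heq ▸ Nat.minFac_dvd b)
        rw [Nat.Coprime] at hcop
        rw [hcop] at hdvd
        have := Nat.le_of_dvd one_pos hdvd
        have := hpa.two_le
        omega
    -- image set contradicts χ₀
    refine hχ₀ ⟨i, S.image g, ?_, ?_, ?_⟩
    · intro x hx
      simp only [Finset.coe_image, Set.mem_image, Finset.mem_coe] at hx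
      obtain ⟨a, ha, rfl⟩ := hx
      have := hrange a ha
      simp [Set.mem_Icc]; omega
    · rw [Finset.card_image_of_injOn, hScard]
      intro a ha b hb hab
      by_contra h
      exact hinj a ha b hb h hab
    · intro x hx y hy hxy
      simp only [Finset.mem_image] at hx hy
      obtain ⟨a, ha, rfl⟩ := hx
      obtain ⟨b, hb, rfl⟩ := hy
      have hab : a ≠ b := by rintro rfl; exact hxy rfl
      have := hmono a ha b hb hab
      simpa [Sym2.map_pair_eq] using this
end

section
/- Suppose a graph H has a clique C of size r and a labeling λ : V(H) → C that is the identity on C and distinct on adjacent vertices. Then every c-edge-coloring of H contains a monochromatic k_i-clique in some color i if and only if r ≥ R_cl(k_1,...,k_c), the classical multicolor Ramsey number. -/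
/-- Rank Ramsey transfer, edge form: with a clique-label certificate of rank `r`,
every `c`-edge-coloring of `H` forces a monochromatic `k i`-clique in some color
iff `r ≥ R_cl(k_1,...,k_c)`, the classical multicolor Ramsey number. -/
theorem clique_label_edge_transfer {V : Type*} [DecidableEq V]
    (H : SimpleGraph V) (C : Finset V) (r : ℕ) (hC : H.IsClique ↑C)
    (hCr : C.card = r) (lab : V → V) (hmem : ∀ v, lab v ∈ C)
    (hid : ∀ v ∈ C, lab v = v) (hadj : ∀ u v, H.Adj u v → lab u ≠ lab v)
    (c : ℕ) (hc : 1 ≤ c) (k : Fin c → ℕ) (hk : ∀ i, 2 ≤ k i) (R : ℕ)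
    (hR : IsLeast {N : ℕ | ∀ χ : Sym2 ℕ → Fin c, ∃ i : Fin c, ∃ S : Finset ℕ,
      ↑S ⊆ Set.Icc 1 N ∧ S.card = k i ∧
      ∀ a ∈ S, ∀ b ∈ S, a ≠ b → χ s(a, b) = i} R) :
    (∀ χ : Sym2 V → Fin c, ∃ i : Fin c, ∃ S : Finset V, S.card = k i ∧
      H.IsClique ↑S ∧ ∀ a ∈ S, ∀ b ∈ S, a ≠ b → χ s(a, b) = i) ↔
    R ≤ r := by
  have hIcc : (Finset.Icc 1 r).card = r := by simp [Nat.card_Icc]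
  have eC : {x // x ∈ C} ≃ Fin r := C.equivFinOfCardEq hCr
  have eI : {x // x ∈ Finset.Icc 1 r} ≃ Fin r := (Finset.Icc 1 r).equivFinOfCardEq hIcc
  constructor
  · -- forward: show r is in the set, so R ≤ r by leastness
    intro h
    apply hR.2
    intro χ
    set g : V → ℕ := fun v => ((eI.symm (eC ⟨lab v, hmem v⟩)) : ℕ) with hg
    obtain ⟨i, S, hScard, hSclique, hSmono⟩ :=
      h (fun p => χ (p.map g))
    have hginj : Set.InjOn g S := by
      intro u hu v hv huv
      by_contra hne
      have hadj' : H.Adj u v := hSclique hu hv hne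
      apply hadj u v hadj'
      have := eI.symm.injective (Subtype.coe_injective huv)
      exact congrArg Subtype.val (eC.injective this)
    refine ⟨i, S.image g, ?_, ?_, ?_⟩
    · intro x hx
      simp only [Finset.coe_image, Set.mem_image, Finset.mem_coe] at hx
      obtain ⟨v, _, rfl⟩ := hx
      have := (eI.symm (eC ⟨lab v, hmem v⟩)).2
      rw [← Finset.coe_Icc]
      exact this
    · rw [Finset.card_image_of_injOn hginj, hScard]
    · intro a ha b hb hab
      simp only [Finset.mem_image] at ha hb
      obtain ⟨u, hu, rfl⟩ := ha
      obtain ⟨v, hv, rfl⟩ := hb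
      have huv : u ≠ v := fun e => hab (by rw [e])
      have := hSmono u hu v hv huv
      simpa [Sym2.map_pair_eq] using this
  · -- backward
    intro hRr χ
    -- C is nonempty (r ≥ 1) since R ≥ 1
    have hR1 : 1 ≤ R := by
      obtain ⟨i, S, hsub, hcard, _⟩ := hR.1 (fun _ => (⟨0, hc⟩ : Fin c))
      have hSne : S.Nonempty := by
        have := hk i; rw [← Finset.card_pos, hcard]; omega
      obtain ⟨a, ha⟩ := hSne
      have := hsub ha
      exact le_trans this.1 this.2
    have hr1 : 1 ≤ r := le_trans hR1 hRr
    have hCne : C.Nonempty := by rw [← Finset.card_pos, hCr]; omega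
    classical
    set f : ℕ → V := fun n =>
      if h : n ∈ Finset.Icc 1 r then ((eC.symm (eI ⟨n, h⟩)) : V) else hCne.choose with hf
    obtain ⟨i, S, hsub, hcard, hmono⟩ := hR.1 (fun p => χ (p.map f))
    have hSIcc : ∀ n ∈ S, n ∈ Finset.Icc 1 r := by
      intro n hn
      have := hsub hn
      simp only [Set.mem_Icc] at this
      exact Finset.mem_Icc.2 ⟨this.1, le_trans this.2 hRr⟩
    have hfval : ∀ n (hn : n ∈ S), f n = ((eC.symm (eI ⟨n, hSIcc n hn⟩)) : V) := by
      intro n hn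
      simp only [hf]
      rw [dif_pos (hSIcc n hn)]
    have hfC : ∀ n ∈ S, f n ∈ C := by
      intro n hn
      rw [hfval n hn]
      exact (eC.symm (eI ⟨n, _⟩)).2
    have hfinj : Set.InjOn f S := by
      intro m hm n hn hmn
      rw [hfval m hm, hfval n hn] at hmn
      have := eC.symm.injective (Subtype.coe_injective hmn)
      exact congrArg Subtype.val (eI.injective this)
    refine ⟨i, S.image f, ?_, ?_, ?_⟩
    · rw [Finset.card_image_of_injOn hfinj, hcard]
    · apply hC.subset
      intro x hx
      simp only [Finset.coe_image, Set.mem_image, Finset.mem_coe] at hx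
      obtain ⟨n, hn, rfl⟩ := hx
      exact hfC n hn
    · intro a ha b hb hab
      simp only [Finset.mem_image] at ha hb
      obtain ⟨m, hm, rfl⟩ := ha
      obtain ⟨n, hn, rfl⟩ := hb
      have hmn : m ≠ n := fun e => hab (by rw [e])
      have := hmono m hm n hn hmn
      simpa [Sym2.map_pair_eq] using this
end

section
/- Let d ≥ 1 and let G_{n,d} be the graph on {1,...,n} with edges ab exactly when gcd(a,b) = d. The edge-coloring clique Ramsey threshold on G_{n,d} equals d · p_{R_cl(k_1,...,k_c)−1}. -/
/-- Map `{1,…,R}` to `{1, p₁, …, p_{R-1}}`: `1 ↦ 1`, `j ↦ (j-2)`-th prime for `j ≥ 2`. -/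
private noncomputable def hIdx (j : ℕ) : ℕ := if j ≤ 1 then 1 else Nat.nth Nat.Prime (j - 2)

/-- Map `x` to `1` if `x ≤ 1`, else to `2 +` the index of its smallest prime factor. -/
private noncomputable def fIdx (x : ℕ) : ℕ := if x ≤ 1 then 1 else Nat.count Nat.Prime x.minFac + 2

private lemma hIdx_one_le (j : ℕ) : 1 ≤ hIdx j := by
  unfold hIdx
  split
  · exact le_refl 1
  · exact le_of_lt (Nat.prime_nth_prime _).one_lt

private lemma hIdx_le {j R : ℕ} (hj : j ≤ R) : hIdx j ≤ Nat.nth Nat.Prime (R - 2) := by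
  unfold hIdx
  split
  · exact le_of_lt (Nat.prime_nth_prime _).one_lt
  · exact (Nat.nth_le_nth Nat.infinite_setOf_prime).2 (by omega)

private lemma hIdx_coprime {a b : ℕ} (hab : a ≠ b) :
    Nat.Coprime (hIdx a) (hIdx b) := by
  unfold hIdx
  rcases le_or_gt a 1 with ha | ha
  · rw [if_pos ha]; exact Nat.coprime_one_left _
  · rw [if_neg (by omega)]
    rcases le_or_gt b 1 with hb | hb
    · rw [if_pos hb]; exact Nat.coprime_one_right _
    · rw [if_neg (by omega)]
      refine (Nat.coprime_primes (Nat.prime_nth_prime _) (Nat.prime_nth_prime _)).2 ?_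
      intro h
      have := Nat.nth_injective Nat.infinite_setOf_prime h
      omega

private lemma hIdx_inj {a b : ℕ} (ha : 1 ≤ a) (hb : 1 ≤ b) (hab : a ≠ b) :
    hIdx a ≠ hIdx b := by
  unfold hIdx
  rcases le_or_gt a 1 with h1 | h1 <;> rcases le_or_gt b 1 with h2 | h2
  · omega
  · rw [if_pos h1, if_neg (by omega)]
    exact fun h => (Nat.prime_nth_prime _).ne_one h.symm
  · rw [if_neg (by omega), if_pos h2]
    exact fun h => (Nat.prime_nth_prime _).ne_one h
  · rw [if_neg (by omega), if_neg (by omega)]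
    intro h
    have := Nat.nth_injective Nat.infinite_setOf_prime h
    omega

private lemma fIdx_one_le (x : ℕ) : 1 ≤ fIdx x := by unfold fIdx; split <;> omega

private lemma fIdx_le {x m : ℕ} (hx : 2 ≤ x) (hxm : x < Nat.nth Nat.Prime m) :
    fIdx x ≤ m + 1 := by
  unfold fIdx
  rw [if_neg (by omega)]
  have hp : x.minFac.Prime := Nat.minFac_prime (by omega)
  have h1 : x.minFac < Nat.nth Nat.Prime m :=
    lt_of_le_of_lt (Nat.minFac_le (by omega)) hxm
  have h2 : Nat.count Nat.Prime (x.minFac + 1) = Nat.count Nat.Prime x.minFac + 1 := by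
    rw [Nat.count_succ, if_pos hp]
  have h3 : Nat.count Nat.Prime (x.minFac + 1) ≤ Nat.count Nat.Prime (Nat.nth Nat.Prime m) :=
    Nat.count_monotone _ (by omega)
  rw [Nat.count_nth_of_infinite Nat.infinite_setOf_prime] at h3
  omega

private lemma fIdx_inj {x y : ℕ} (hx : 1 ≤ x) (hy : 1 ≤ y) (hxy : x ≠ y)
    (hcop : Nat.Coprime x y) : fIdx x ≠ fIdx y := by
  unfold fIdx
  rcases le_or_gt x 1 with h1 | h1 <;> rcases le_or_gt y 1 with h2 | h2
  · omega
  · rw [if_pos h1, if_neg (by omega)]; omega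
  · rw [if_neg (by omega), if_pos h2]; omega
  · rw [if_neg (by omega), if_neg (by omega)]
    intro he
    have he' : Nat.count Nat.Prime x.minFac = Nat.count Nat.Prime y.minFac := by omega
    have hpx : x.minFac.Prime := Nat.minFac_prime (by omega)
    have hpy : y.minFac.Prime := Nat.minFac_prime (by omega)
    have : x.minFac = y.minFac := by
      have := congrArg (Nat.nth Nat.Prime) he'
      rwa [Nat.nth_count hpx, Nat.nth_count hpy] at this
    have hdvd : x.minFac ∣ Nat.gcd x y :=
      Nat.dvd_gcd (Nat.minFac_dvd x) (this ▸ Nat.minFac_dvd y)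
    rw [hcop] at hdvd
    exact hpx.ne_one (Nat.eq_one_of_dvd_one hdvd)

/-- Scaled gcd-`d` edge-clique variant: the least `n` such that every `c`-edge-coloring
of the graph on `{1,...,n}` with edges `gcd a b = d` forces a monochromatic
`k i`-clique in some color equals `d * p_{R_cl - 1}`. -/
theorem gcd_d_edge_ramsey_scaling (d : ℕ) (hd : 1 ≤ d) (c : ℕ) (hc : 1 ≤ c)
    (k : Fin c → ℕ) (hk : ∀ i, 2 ≤ k i) (R : ℕ)
    (hR : IsLeast {N : ℕ | ∀ χ : Sym2 ℕ → Fin c, ∃ i : Fin c, ∃ S : Finset ℕ,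
      ↑S ⊆ Set.Icc 1 N ∧ S.card = k i ∧
      ∀ a ∈ S, ∀ b ∈ S, a ≠ b → χ s(a, b) = i} R) :
    IsLeast {n : ℕ | ∀ χ : Sym2 ℕ → Fin c, ∃ i : Fin c, ∃ S : Finset ℕ,
      ↑S ⊆ Set.Icc 1 n ∧ S.card = k i ∧
      ∀ a ∈ S, ∀ b ∈ S, a ≠ b → Nat.gcd a b = d ∧ χ s(a, b) = i}
    (d * Nat.nth Nat.Prime (R - 2)) := by
  set p := Nat.nth Nat.Prime (R - 2) with hp
  -- R ≥ 2
  have hR2 : 2 ≤ R := by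
    by_contra h
    obtain ⟨i, S, hsub, hcard, -⟩ := hR.1 (fun _ => ⟨0, hc⟩)
    have : S ⊆ Finset.Icc 1 R := fun x hx => by
      have := hsub hx; simp only [Set.mem_Icc] at this
      exact Finset.mem_Icc.2 this
    have := Finset.card_le_card this
    rw [hcard, Nat.card_Icc] at this
    have := hk i
    omega
  constructor
  · -- membership
    intro χ
    obtain ⟨i, S, hsub, hcard, hmono⟩ := hR.1
      (fun e => χ (e.map (fun x => d * hIdx x)))
    refine ⟨i, S.image (fun x => d * hIdx x), ?_, ?_, ?_⟩
    · intro x hx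
      simp only [Finset.coe_image, Set.mem_image, Finset.mem_coe] at hx
      obtain ⟨a, ha, rfl⟩ := hx
      have h1 := hIdx_one_le a
      have h2 : hIdx a ≤ p := hIdx_le (by
        have := hsub ha; simp only [Set.mem_Icc] at this; exact this.2)
      constructor
      · exact le_trans hd (Nat.le_mul_of_pos_right d (by omega))
      · exact Nat.mul_le_mul_left d h2
    · rw [Finset.card_image_of_injOn, hcard]
      intro a ha b hb he
      by_contra hab
      have h1 : 1 ≤ a := by have := hsub ha; simp only [Set.mem_Icc] at this; exact this.1
      have h2 : 1 ≤ b := by have := hsub hb; simp only [Set.mem_Icc] at this; exact this.1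
      exact hIdx_inj h1 h2 hab (Nat.eq_of_mul_eq_mul_left (by omega) he)
    · intro x hx y hy hxy
      simp only [Finset.mem_image] at hx hy
      obtain ⟨a, ha, rfl⟩ := hx
      obtain ⟨b, hb, rfl⟩ := hy
      have hab : a ≠ b := fun h => hxy (by rw [h])
      have hcop : Nat.Coprime (hIdx a) (hIdx b) := hIdx_coprime hab
      constructor
      · rw [Nat.gcd_mul_left, hcop, mul_one]
      · have := hmono a ha b hb hab
        rwa [Sym2.map_pair_eq] at this
  · -- lower bound
    intro n hn
    by_contra hlt
    push_neg at hlt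
    -- get a bad coloring for R - 1
    have hnot : R - 1 ∉ {N : ℕ | ∀ χ : Sym2 ℕ → Fin c, ∃ i : Fin c, ∃ S : Finset ℕ,
        ↑S ⊆ Set.Icc 1 N ∧ S.card = k i ∧
        ∀ a ∈ S, ∀ b ∈ S, a ≠ b → χ s(a, b) = i} := by
      intro h
      have := hR.2 h
      omega
    simp only [Set.mem_setOf_eq, not_forall] at hnot
    obtain ⟨χ₀, hχ₀⟩ := hnot
    obtain ⟨i, S, hsub, hcard, hmono⟩ := hn (fun e => χ₀ (e.map (fun x => fIdx (x / d))))
    -- every element of S is a multiple of d with quotient in [1, p-1]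
    have hdvd : ∀ a ∈ S, d ∣ a ∧ 1 ≤ a / d ∧ a / d < p := by
      intro a ha
      obtain ⟨b, hb, hba⟩ := Finset.exists_mem_ne (by
        rw [hcard]; exact lt_of_lt_of_le one_lt_two (hk i)) a
      have hg := (hmono a ha b hb (Ne.symm hba)).1
      have hda : d ∣ a := hg ▸ Nat.gcd_dvd_left a b
      have ha1 : 1 ≤ a ∧ a ≤ n := by
        have := hsub ha; simpa only [Set.mem_Icc] using this
      refine ⟨hda, ?_, ?_⟩
      · exact Nat.one_le_div_iff (by omega) |>.2 (Nat.le_of_dvd (by omega) hda)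
      · have : a < d * p := lt_of_le_of_lt ha1.2 hlt
        exact Nat.div_lt_of_lt_mul (by omega)
    have hcop : ∀ a ∈ S, ∀ b ∈ S, a ≠ b → Nat.Coprime (a / d) (b / d) := by
      intro a ha b hb hab
      have hg := (hmono a ha b hb hab).1
      have := Nat.coprime_div_gcd_div_gcd (m := a) (n := b) (by rw [hg]; omega)
      rwa [hg] at this
    refine hχ₀ ⟨i, S.image (fun a => fIdx (a / d)), ?_, ?_, ?_⟩
    · intro x hx
      simp only [Finset.coe_image, Set.mem_image, Finset.mem_coe] at hx
      obtain ⟨a, ha, rfl⟩ := hx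
      obtain ⟨-, h1, h2⟩ := hdvd a ha
      refine Set.mem_Icc.2 ⟨fIdx_one_le _, ?_⟩
      rcases le_or_gt (a / d) 1 with hle | hgt
      · unfold fIdx; rw [if_pos hle]; omega
      · have := fIdx_le hgt h2
        omega
    · rw [Finset.card_image_of_injOn, hcard]
      intro a ha b hb he
      by_contra hab
      have hq : a / d ≠ b / d := by
        intro he
        obtain ⟨hda, -, -⟩ := hdvd a ha
        obtain ⟨hdb, -, -⟩ := hdvd b hb
        exact hab (by rw [← Nat.div_mul_cancel hda, ← Nat.div_mul_cancel hdb, he])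
      exact fIdx_inj (hdvd a ha).2.1 (hdvd b hb).2.1 hq (hcop a ha b hb hab) he
    · intro x hx y hy hxy
      simp only [Finset.mem_image] at hx hy
      obtain ⟨a, ha, rfl⟩ := hx
      obtain ⟨b, hb, rfl⟩ := hy
      have hab : a ≠ b := fun h => hxy (by rw [h])
      have := (hmono a ha b hb hab).2
      rwa [Sym2.map_pair_eq] at this
end

section
/- For every k ≥ 2, the largest n for which there exists a two-coloring of {1,...,n} with color classes differing in size by at most 1 and with no monochromatic set of k pairwise coprime integers equals p_{2k−2} − 1. -/
open Finset

namespace BTC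


/-- mod-6 filter count -/
noncomputable def A (X : ℕ) : ℕ := ((Finset.range X).filter (fun m => m % 6 = 1 ∨ m % 6 = 5)).card

lemma A_succ (X : ℕ) :
    A (X + 1) = A X + (if X % 6 = 1 ∨ X % 6 = 5 then 1 else 0) := by
  unfold A
  rw [Finset.range_add_one, Finset.filter_insert]
  split
  · rw [Finset.card_insert_of_notMem (by simp)]
  · simp

lemma A_eq (X : ℕ) : A X = 2 * (X / 6) + (if 2 ≤ X % 6 then 1 else 0) := by
  induction X with
  | zero => simp [A]
  | succ X ih =>
    rw [A_succ, ih]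
    split_ifs <;> omega

lemma count_prime_le (X : ℕ) (hX : 2 ≤ X) : Nat.count Nat.Prime X ≤ A X + 1 := by
  have hsub : (Finset.range X).filter Nat.Prime ⊆
      insert 2 (insert 3 (((Finset.range X).filter (fun m => m % 6 = 1 ∨ m % 6 = 5)).erase 1)) := by
    intro p hp
    simp only [Finset.mem_filter, Finset.mem_range] at hp
    obtain ⟨hpX, hp⟩ := hp
    simp only [Finset.mem_insert, Finset.mem_erase, Finset.mem_filter, Finset.mem_range]
    rcases eq_or_ne p 2 with rfl | h2; · left; rfl
    rcases eq_or_ne p 3 with rfl | h3; · right; left; rfl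
    right; right
    refine ⟨hp.one_lt.ne', hpX, ?_⟩
    have hd2 : ¬ (2 ∣ p) := fun h => h2 ((Nat.prime_dvd_prime_iff_eq Nat.prime_two hp).mp h).symm
    have hd3 : ¬ (3 ∣ p) := fun h => h3 ((Nat.prime_dvd_prime_iff_eq Nat.prime_three hp).mp h).symm
    omega
  have h1 : (1 : ℕ) ∈ (Finset.range X).filter (fun m => m % 6 = 1 ∨ m % 6 = 5) := by
    simp; omega
  calc Nat.count Nat.Prime X = ((Finset.range X).filter Nat.Prime).card := by
        rw [Nat.count_eq_card_filter_range]
    _ ≤ _ := Finset.card_le_card hsub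
    _ ≤ 2 + (A X - 1) := by
        refine (Finset.card_insert_le _ _).trans ?_
        have := Finset.card_insert_le 3 (((Finset.range X).filter (fun m => m % 6 = 1 ∨ m % 6 = 5)).erase 1)
        have hc : (((Finset.range X).filter (fun m => m % 6 = 1 ∨ m % 6 = 5)).erase 1).card = A X - 1 := by
          rw [Finset.card_erase_of_mem h1]; rfl
        omega
    _ ≤ A X + 1 := by
        have : 1 ≤ A X := by
          have := Finset.card_pos.mpr ⟨1, h1⟩
          unfold A; omega
        omega

lemma count_prime_le' (m : ℕ) : Nat.count Nat.Prime (3 * m - 2) ≤ m := by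
  rcases Nat.lt_or_ge m 2 with h | h
  · interval_cases m <;> simp [Nat.count_eq_card_filter_range] <;> decide
  · have h2 : 2 ≤ 3 * m - 2 := by omega
    have := count_prime_le (3 * m - 2) h2
    rw [A_eq] at this
    split_ifs at this <;> omega

lemma q_lower (m : ℕ) : 3 * m - 2 ≤ Nat.nth Nat.Prime m :=
  (Nat.count_le_iff_le_nth Nat.infinite_setOf_prime).mp (count_prime_le' m)



lemma cb_le (m : ℕ) (hm : 0 < m) :
    Nat.centralBinom m ≤ (2 * m) ^ (Nat.count Nat.Prime (2 * m + 1)) := by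
  have hne : Nat.centralBinom m ≠ 0 := Nat.centralBinom_ne_zero m
  have hfac : ∀ p ∈ (Nat.centralBinom m).factorization.support,
      p ^ (Nat.centralBinom m).factorization p ≤ 2 * m := by
    intro p _
    exact Nat.pow_factorization_choose_le (by omega)
  have hsupp : (Nat.centralBinom m).factorization.support ⊆
      (Finset.range (2 * m + 1)).filter Nat.Prime := by
    intro p hp
    have hpp : Nat.Prime p := Nat.prime_of_mem_primeFactors (by rwa [Nat.support_factorization] at hp)
    have hple : p ≤ 2 * m := by
      have he : (Nat.centralBinom m).factorization p ≠ 0 := Finsupp.mem_support_iff.mp hp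
      calc p ≤ p ^ (Nat.centralBinom m).factorization p := Nat.le_self_pow he p
        _ ≤ 2 * m := hfac p hp
    simp only [Finset.mem_filter, Finset.mem_range]
    exact ⟨by omega, hpp⟩
  calc Nat.centralBinom m
      = (Nat.centralBinom m).factorization.prod (· ^ ·) :=
        (Nat.factorization_prod_pow_eq_self hne).symm
    _ = ∏ p ∈ (Nat.centralBinom m).factorization.support,
          p ^ (Nat.centralBinom m).factorization p := rfl
    _ ≤ (2 * m) ^ (Nat.centralBinom m).factorization.support.card :=
        Finset.prod_le_pow_card _ _ _ hfac
    _ ≤ (2 * m) ^ (Nat.count Nat.Prime (2 * m + 1)) := by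
        apply Nat.pow_le_pow_right (by omega)
        rw [Nat.count_eq_card_filter_range]
        exact Finset.card_le_card hsupp

lemma cheb (m : ℕ) (hm : 4 ≤ m) :
    2 ^ (2 * m) ≤ (2 * m) ^ (Nat.count Nat.Prime (2 * m + 1) + 1) := by
  have h1 : 4 ^ m < m * Nat.centralBinom m := Nat.four_pow_lt_mul_centralBinom m hm
  have h2 := cb_le m (by omega)
  calc 2 ^ (2 * m) = 4 ^ m := by rw [pow_mul]; norm_num
    _ ≤ m * Nat.centralBinom m := h1.le
    _ ≤ (2 * m) * (2 * m) ^ (Nat.count Nat.Prime (2 * m + 1)) := by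
        exact Nat.mul_le_mul (by omega) h2
    _ = (2 * m) ^ (Nat.count Nat.Prime (2 * m + 1) + 1) := by ring

lemma sq_le_two_pow (t : ℕ) (ht : 5 ≤ t) : t ^ 2 ≤ 2 ^ t := by
  induction t with
  | zero => omega
  | succ t ih =>
    rcases Nat.lt_or_ge t 5 with h | h
    · interval_cases t <;> simp_all <;> norm_num
    · have := ih (by omega)
      have h2 : (t + 1) ^ 2 ≤ 2 * t ^ 2 := by nlinarith
      calc (t + 1) ^ 2 ≤ 2 * t ^ 2 := h2
        _ ≤ 2 * 2 ^ t := by omega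
        _ = 2 ^ (t + 1) := by ring


lemma count_seven : Nat.count Nat.Prime 7 = 3 := by decide
lemma nth_three : Nat.nth Nat.Prime 3 = 7 := by
  have := Nat.nth_count (p := Nat.Prime) (n := 7) (by norm_num)
  rwa [count_seven] at this

lemma key (k : ℕ) (hk : 2 ≤ k) :
    Nat.nth Nat.Prime (2 * k - 3) ≤ Nat.nth Nat.Prime (k - 1) ^ 2 := by
  rcases Nat.lt_or_ge k 4 with hsmall | hbig
  · have h1 : Nat.nth Nat.Prime 1 = 3 := Nat.nth_prime_one_eq_three
    have h2 : Nat.nth Nat.Prime 2 = 5 := by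
      have hc : Nat.count Nat.Prime 5 = 2 := by decide
      have := Nat.nth_count (p := Nat.Prime) (n := 5) (by norm_num)
      rwa [hc] at this
    rcases (by omega : k = 2 ∨ k = 3) with rfl | rfl
    · norm_num [h1]
    · norm_num [nth_three, h2]
  · set t : ℕ := 3 * k - 5 with ht
    have ht7 : 7 ≤ t := by omega
    set M : ℕ := t ^ 2 / 2 with hM
    have hM4 : 4 ≤ M := by
      have : 49 ≤ t ^ 2 := by nlinarith
      omega
    have h2M : t ^ 2 - 1 ≤ 2 * M ∧ 2 * M ≤ t ^ 2 := by omega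
    have hcount : 2 * k - 3 < Nat.count Nat.Prime (2 * M + 1) := by
      by_contra hc
      push_neg at hc
      have h1 : 2 ^ (2 * M) ≤ (2 * M) ^ (Nat.count Nat.Prime (2 * M + 1) + 1) := cheb M hM4
      have h2 : (2 * M) ^ (Nat.count Nat.Prime (2 * M + 1) + 1) ≤ (2 ^ t) ^ (2 * k - 2) := by
        calc (2 * M) ^ (Nat.count Nat.Prime (2 * M + 1) + 1)
            ≤ (2 ^ t) ^ (Nat.count Nat.Prime (2 * M + 1) + 1) := by
              apply Nat.pow_le_pow_left
              calc 2 * M ≤ t ^ 2 := h2M.2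
                _ ≤ 2 ^ t := sq_le_two_pow t (by omega)
          _ ≤ (2 ^ t) ^ (2 * k - 2) := by
              apply Nat.pow_le_pow_right (by positivity)
              omega
      have h3 : 2 ^ (2 * M) ≤ 2 ^ (t * (2 * k - 2)) := by
        rw [← pow_mul] at h2; exact h1.trans h2
      have h4 : 2 * M ≤ t * (2 * k - 2) := by
        exact (Nat.pow_le_pow_iff_right (by omega)).mp h3
      -- t^2 - 1 ≤ t * (2k-2), but t = 3k-5 ≥ 7, k ≥ 4
      have h5 : t * t - 1 ≤ t * (2 * k - 2) := by
        have : t * t = t ^ 2 := (sq t).symm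
        omega
      have h6 : t * (2 * k - 2) + 7 ≤ t * t := by
        have : t * (2 * k - 2) + 1 * (k - 3) * 7 ≤ t * (2 * k - 2) + t * (k - 3) := by
          have : 1 * (k-3) * 7 ≤ t * (k - 3) := by
            calc 1 * (k-3) * 7 = 7 * (k-3) := by ring
              _ ≤ t * (k-3) := Nat.mul_le_mul_right _ ht7
          omega
        have heq : t * (2 * k - 2) + t * (k - 3) = t * t := by
          rw [← Nat.mul_add]
          congr 1
          omega
        have hk3 : 1 ≤ k - 3 := by omega
        nlinarith
      omega
    have hnth : Nat.nth Nat.Prime (2 * k - 3) < 2 * M + 1 := by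
      exact (Nat.lt_nth_iff_count_lt (p := Nat.Prime) Nat.infinite_setOf_prime).mp hcount
    have hq : t ≤ Nat.nth Nat.Prime (k - 1) := by
      have := q_lower (k - 1)
      omega
    calc Nat.nth Nat.Prime (2 * k - 3) ≤ 2 * M := by omega
      _ ≤ t ^ 2 := h2M.2
      _ ≤ Nat.nth Nat.Prime (k - 1) ^ 2 := Nat.pow_le_pow_left hq 2

/-- abbreviation -/
noncomputable def q (i : ℕ) : ℕ := Nat.nth Nat.Prime i

lemma q_prime (i : ℕ) : Nat.Prime (q i) := Nat.prime_nth_prime i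

lemma q_lt_q {i j : ℕ} (h : i < j) : q i < q j :=
  (Nat.nth_lt_nth Nat.infinite_setOf_prime).mpr h

lemma q_le_q {i j : ℕ} (h : i ≤ j) : q i ≤ q j :=
  (Nat.nth_le_nth Nat.infinite_setOf_prime).mpr h

lemma q_zero : q 0 = 2 := Nat.nth_prime_zero_eq_two

lemma q_one : q 1 = 3 := Nat.nth_prime_one_eq_three

lemma two_le_q (i : ℕ) : 2 ≤ q i := (q_prime i).two_le

lemma q_odd {i : ℕ} (h : 1 ≤ i) : q i % 2 = 1 := by
  have h3 : 3 ≤ q i := q_one ▸ q_le_q h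
  have h2 := (q_prime i).odd_of_ne_two (by omega)
  rw [Nat.odd_iff] at h2
  exact h2

lemma count_le_of_le_q {p j : ℕ} (h : p ≤ q j) : Nat.count Nat.Prime p ≤ j :=
  (Nat.count_le_iff_le_nth Nat.infinite_setOf_prime).mpr h

lemma lt_count_of_q_lt {p j : ℕ} (h : q j < p) : j < Nat.count Nat.Prime p :=
  (Nat.lt_nth_iff_count_lt Nat.infinite_setOf_prime).mpr h

lemma count_pos_of_three_le {p : ℕ} (h : 3 ≤ p) : 1 ≤ Nat.count Nat.Prime p := by
  have : q 0 < p := by rw [q_zero]; omega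
  have := lt_count_of_q_lt this
  omega

/-- a prime `p` with `3 ≤ p ≤ q j` is `q i` for some `1 ≤ i ≤ j`. -/
lemma prime_idx {p j : ℕ} (hp : p.Prime) (h3 : 3 ≤ p) (hle : p ≤ q j) :
    ∃ i, 1 ≤ i ∧ i ≤ j ∧ q i = p := by
  refine ⟨Nat.count Nat.Prime p, count_pos_of_three_le h3, count_le_of_le_q hle, ?_⟩
  exact Nat.nth_count hp

/-- a prime `p` with `q j₁ < p < q j₂` is `q i` for some `j₁ < i < j₂`. -/
lemma prime_idx' {p j₁ j₂ : ℕ} (hp : p.Prime) (h1 : q j₁ < p) (h2 : p < q j₂) :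
    ∃ i, j₁ < i ∧ i < j₂ ∧ q i = p := by
  refine ⟨Nat.count Nat.Prime p, lt_count_of_q_lt h1, ?_, Nat.nth_count hp⟩
  by_contra h
  push_neg at h
  have hle := q_le_q h
  have heq : q (Nat.count Nat.Prime p) = p := Nat.nth_count hp
  omega

/-- injectivity of a "prime divisor selector" on a pairwise-coprime set -/
lemma injOn_of_coprime {S : Finset ℕ} (hcop : (↑S : Set ℕ).Pairwise Nat.Coprime)
    {f : ℕ → ℕ} (hf : ∀ a ∈ S, f a ∣ a ∧ 2 ≤ f a) : Set.InjOn f ↑S := by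
  intro a ha b hb hab
  by_contra hne
  have hcab := hcop ha hb hne
  have h1 := (hf a ha).1
  have h2 := (hf b hb).1
  rw [hab] at h1
  have : f b ∣ Nat.gcd a b := Nat.dvd_gcd h1 h2
  rw [Nat.Coprime] at hcab
  rw [hcab] at this
  have := Nat.le_of_dvd one_pos this
  have := (hf b hb).2
  omega

section Main

variable (k : ℕ)

/-- the moved evens -/
def Mv : Finset ℕ := (Finset.Icc 1 (k - 2)).image (fun i => 6 * i)

/-- the coloring condition for color 0 -/
def cond (a : ℕ) : Prop :=
  (a % 2 = 1 ∧ (a = 1 ∨ Nat.minFac a ≤ q (k - 2))) ∨ (a % 2 = 0 ∧ a ∈ Mv k)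

noncomputable instance : DecidablePred (cond k) := fun _ => Classical.propDecidable _

/-- the coloring -/
noncomputable def chi (a : ℕ) : Fin 2 := if cond k a then 0 else 1

lemma chi_eq_one_iff (a : ℕ) : chi k a = 1 ↔ ¬ cond k a := by
  unfold chi; split <;> simp_all

lemma chi_eq_zero_iff (a : ℕ) : chi k a = 0 ↔ cond k a := by
  unfold chi; split <;> simp_all

variable (hk : 2 ≤ k)
include hk

lemma n_eq : q (2 * k - 3) - 1 + 1 = q (2 * k - 3) := by
  have := two_le_q (2 * k - 3); omega

lemma n_even : (q (2 * k - 3) - 1) % 2 = 0 := by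
  have := q_odd (i := 2 * k - 3) (by omega); omega

omit hk in
lemma q_lower' (m : ℕ) : 3 * m - 2 ≤ q m := q_lower m

omit hk in
lemma key' (hk2 : 2 ≤ k) : q (2 * k - 3) ≤ q (k - 1) ^ 2 := key k hk2

lemma n_lower : 6 * (k - 2) ≤ q (2 * k - 3) - 1 := by
  have := q_lower' (2 * k - 3); omega

/-- Part A : color 0 has no k pairwise coprime elements -/
lemma partA : ¬ ∃ S : Finset ℕ, ↑S ⊆ Set.Icc 1 (q (2 * k - 3) - 1) ∧
    (∀ a ∈ S, chi k a = 0) ∧ (S : Set ℕ).Pairwise Nat.Coprime ∧ S.card = k := by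
  rintro ⟨S, hsub, hcol, hcop, hcard⟩
  set S' := S.erase 1 with hS'
  have hS'sub : S' ⊆ S := Finset.erase_subset _ _
  set f : ℕ → ℕ := fun a => if a % 2 = 0 then 3 else Nat.minFac a with hf
  have hprop : ∀ a ∈ S', f a ∣ a ∧ (f a).Prime ∧ 1 ≤ k - 2 ∧ 3 ≤ f a ∧ f a ≤ q (k - 2) := by
    intro a ha
    have haS := hS'sub ha
    have hane : a ≠ 1 := Finset.ne_of_mem_erase ha
    have ha1 : 1 ≤ a := (hsub haS).1
    have hcond : cond k a := (chi_eq_zero_iff k a).mp (hcol a haS)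
    rcases Nat.even_or_odd a with he | ho
    · have he2 : a % 2 = 0 := Nat.even_iff.mp he
      have hM : a ∈ Mv k := by
        rcases hcond with ⟨h1, _⟩ | ⟨_, h2⟩
        · omega
        · exact h2
      obtain ⟨i, hi, hia⟩ := Finset.mem_image.mp hM
      simp only [Finset.mem_Icc] at hi
      have h3a : (3 : ℕ) ∣ a := ⟨2 * i, by omega⟩
      have hfa : f a = 3 := by simp [hf, he2]
      have hq3 : 3 ≤ q (k - 2) := by
        have h31 : q 1 ≤ q (k - 2) := q_le_q (hi.1.trans hi.2)
        rw [q_one] at h31; omega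
      refine ⟨by rw [hfa]; exact h3a, by rw [hfa]; norm_num, by omega, by omega, by omega⟩
    · have ho2 : a % 2 = 1 := Nat.odd_iff.mp ho
      have hmf : Nat.minFac a ≤ q (k - 2) := by
        rcases hcond with ⟨_, h1⟩ | ⟨h2, _⟩
        · rcases h1 with h | h; · omega
          · exact h
        · omega
      have hfa : f a = Nat.minFac a := by simp [hf, ho2]
      have hprime : (Nat.minFac a).Prime := Nat.minFac_prime hane
      have hne2 : Nat.minFac a ≠ 2 := by
        intro h
        have := Nat.minFac_dvd a
        rw [h] at this
        omega
      have h3 : 3 ≤ Nat.minFac a := by have := hprime.two_le; omega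
      have hq3 : 3 ≤ q (k - 2) := by omega
      have hk2 : 1 ≤ k - 2 := by
        by_contra h
        have : k - 2 = 0 := by omega
        rw [this, q_zero] at hq3
        omega
      exact ⟨by rw [hfa]; exact Nat.minFac_dvd a, by rw [hfa]; exact hprime, hk2, by omega, by omega⟩
  -- map into the target
  have hmaps : ∀ a ∈ S', f a ∈ (Finset.Icc 1 (k - 2)).image (fun i => q i) := by
    intro a ha
    obtain ⟨hdvd, hp, hk2, h3, hle⟩ := hprop a ha
    obtain ⟨i, hi1, hi2, hiq⟩ := prime_idx hp h3 hle
    exact Finset.mem_image.mpr ⟨i, Finset.mem_Icc.mpr ⟨hi1, hi2⟩, hiq⟩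
  have hinj : Set.InjOn f ↑S' := by
    apply injOn_of_coprime (hcop.mono (by exact_mod_cast hS'sub))
    intro a ha
    obtain ⟨hdvd, hp, _, h3, _⟩ := hprop a ha
    exact ⟨hdvd, hp.two_le⟩
  have hcard1 : S'.card = (S'.image f).card := (Finset.card_image_of_injOn hinj).symm
  have hcard2 : (S'.image f).card ≤ k - 2 := by
    calc (S'.image f).card ≤ ((Finset.Icc 1 (k - 2)).image (fun i => q i)).card :=
          Finset.card_le_card (by intro x hx; obtain ⟨a, ha, rfl⟩ := Finset.mem_image.mp hx; exact hmaps a ha)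
      _ ≤ (Finset.Icc 1 (k - 2)).card := Finset.card_image_le
      _ = k - 2 := by rw [Nat.card_Icc]; omega
  have hcard3 : k - 1 ≤ S'.card := by
    rw [hS']
    by_cases h : (1:ℕ) ∈ S
    · rw [Finset.card_erase_of_mem h]; omega
    · rw [Finset.erase_eq_of_notMem h]; omega
  omega

/-- Part B : color 1 has no k pairwise coprime elements -/
lemma partB : ¬ ∃ S : Finset ℕ, ↑S ⊆ Set.Icc 1 (q (2 * k - 3) - 1) ∧
    (∀ a ∈ S, chi k a = 1) ∧ (S : Set ℕ).Pairwise Nat.Coprime ∧ S.card = k := by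
  rintro ⟨S, hsub, hcol, hcop, hcard⟩
  set f : ℕ → ℕ := fun a => if a % 2 = 0 then 2 else Nat.minFac a with hf
  have hprop : ∀ a ∈ S, f a ∣ a ∧ (f a).Prime ∧
      (f a = 2 ∨ ∃ i, k - 1 ≤ i ∧ i ≤ 2 * k - 4 ∧ q i = f a) := by
    intro a ha
    have hane : ¬ cond k a := (chi_eq_one_iff k a).mp (hcol a ha)
    have ha1 : 1 ≤ a := (hsub ha).1
    have han : a ≤ q (2 * k - 3) - 1 := (hsub ha).2
    rcases Nat.even_or_odd a with he | ho
    · have he2 : a % 2 = 0 := Nat.even_iff.mp he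
      have hfa : f a = 2 := by simp [hf, he2]
      exact ⟨by rw [hfa]; exact he.two_dvd, by rw [hfa]; norm_num, Or.inl hfa⟩
    · have ho2 : a % 2 = 1 := Nat.odd_iff.mp ho
      have hne1 : a ≠ 1 ∧ ¬ Nat.minFac a ≤ q (k - 2) := by
        by_contra h
        exact hane (Or.inl ⟨ho2, by tauto⟩)
      have hprime : (Nat.minFac a).Prime := Nat.minFac_prime hne1.1
      have hfa : f a = Nat.minFac a := by simp [hf, ho2]
      have hlt : Nat.minFac a < q (2 * k - 3) := by
        have h1 : Nat.minFac a ≤ a := Nat.minFac_le (by omega)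
        have h2 := two_le_q (2 * k - 3)
        omega
      obtain ⟨i, hi1, hi2, hiq⟩ := prime_idx' hprime (by omega : q (k - 2) < Nat.minFac a) hlt
      refine ⟨by rw [hfa]; exact Nat.minFac_dvd a, by rw [hfa]; exact hprime,
        Or.inr ⟨i, by omega, by omega, by rw [hfa]; exact hiq⟩⟩
  have hmaps : ∀ a ∈ S, f a ∈ insert 2 ((Finset.Icc (k - 1) (2 * k - 4)).image (fun i => q i)) := by
    intro a ha
    rcases (hprop a ha).2.2 with h | ⟨i, hi1, hi2, hiq⟩
    · simp [h]
    · exact Finset.mem_insert_of_mem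
        (Finset.mem_image.mpr ⟨i, Finset.mem_Icc.mpr ⟨hi1, hi2⟩, hiq⟩)
  have hinj : Set.InjOn f ↑S := by
    apply injOn_of_coprime hcop
    intro a ha
    exact ⟨(hprop a ha).1, (hprop a ha).2.1.two_le⟩
  have hcard1 : S.card = (S.image f).card := (Finset.card_image_of_injOn hinj).symm
  have hcard2 : (S.image f).card ≤ k - 1 := by
    calc (S.image f).card
        ≤ (insert 2 ((Finset.Icc (k - 1) (2 * k - 4)).image (fun i => q i))).card :=
          Finset.card_le_card (by
            intro x hx; obtain ⟨a, ha, rfl⟩ := Finset.mem_image.mp hx; exact hmaps a ha)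
      _ ≤ ((Finset.Icc (k - 1) (2 * k - 4)).image (fun i => q i)).card + 1 :=
          Finset.card_insert_le _ _
      _ ≤ (Finset.Icc (k - 1) (2 * k - 4)).card + 1 := by
          have := Finset.card_image_le (f := fun i => q i) (s := Finset.Icc (k - 1) (2 * k - 4))
          omega
      _ ≤ k - 1 := by rw [Nat.card_Icc]; omega
  omega

/-- odd class-1 members in range are exactly the primes q i, k-1 ≤ i ≤ 2k-4 -/
lemma odd_class1 {a : ℕ} (han : a ≤ q (2 * k - 3) - 1) (ho : a % 2 = 1)
    (h1 : a ≠ 1) (h2 : q (k - 2) < Nat.minFac a) :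
    ∃ i, k - 1 ≤ i ∧ i ≤ 2 * k - 4 ∧ q i = a := by
  have ha0 : 0 < a := by
    rcases Nat.eq_zero_or_pos a with h | h
    · omega
    · exact h
  have hprime : a.Prime := by
    by_contra hnp
    have hsq : Nat.minFac a ^ 2 ≤ a := Nat.minFac_sq_le_self ha0 hnp
    have hkey : q (2 * k - 3) ≤ q (k - 1) ^ 2 := key' k hk
    have hp := Nat.minFac_prime h1
    have hidx : k - 2 < Nat.count Nat.Prime (Nat.minFac a) := lt_count_of_q_lt h2
    have hle : q (k - 1) ≤ q (Nat.count Nat.Prime (Nat.minFac a)) := q_le_q (by omega)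
    have heq : q (Nat.count Nat.Prime (Nat.minFac a)) = Nat.minFac a := Nat.nth_count hp
    have hpow : q (k - 1) ^ 2 ≤ Nat.minFac a ^ 2 := Nat.pow_le_pow_left (by omega) 2
    omega
  have hlt : a < q (2 * k - 3) := by have := two_le_q (2 * k - 3); omega
  have hmf : Nat.minFac a = a := hprime.minFac_eq
  obtain ⟨i, hi1, hi2, hiq⟩ := prime_idx' hprime (by omega : q (k - 2) < a) hlt
  exact ⟨i, by omega, by omega, hiq⟩

/-- the class-1 set decomposition and its cardinality -/
lemma card_one :
    ((Finset.Icc 1 (q (2 * k - 3) - 1)).filter (fun a => chi k a = 1)).card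
      = (q (2 * k - 3) - 1) / 2 := by
  set n := q (2 * k - 3) - 1 with hn
  have hne : n % 2 = 0 := n_even k hk
  have hnl : 6 * (k - 2) ≤ n := n_lower k hk
  set E : Finset ℕ := (Finset.Icc 1 n).filter (fun a => a % 2 = 0) with hE
  set P : Finset ℕ := (Finset.Icc (k - 1) (2 * k - 4)).image (fun i => q i) with hP
  have hdecomp : (Finset.Icc 1 n).filter (fun a => chi k a = 1) = (E \ Mv k) ∪ P := by
    apply Finset.ext
    intro a
    simp only [Finset.mem_union, Finset.mem_sdiff, hE, Finset.mem_filter, Finset.mem_Icc]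
    constructor
    · rintro ⟨⟨ha1, han⟩, hchi⟩
      have hcond : ¬ cond k a := (chi_eq_one_iff k a).mp hchi
      rcases Nat.even_or_odd a with he | ho
      · have he2 : a % 2 = 0 := Nat.even_iff.mp he
        left
        refine ⟨⟨⟨ha1, han⟩, he2⟩, fun hM => hcond (Or.inr ⟨he2, hM⟩)⟩
      · have ho2 : a % 2 = 1 := Nat.odd_iff.mp ho
        have h12 : a ≠ 1 ∧ q (k - 2) < Nat.minFac a := by
          by_contra h
          push_neg at h
          rcases Nat.decEq a 1 with h1 | h1
          · exact hcond (Or.inl ⟨ho2, Or.inr (h h1)⟩)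
          · exact hcond (Or.inl ⟨ho2, Or.inl h1⟩)
        obtain ⟨i, hi1, hi2, hiq⟩ := odd_class1 k hk han ho2 h12.1 h12.2
        right
        rw [hP]
        exact Finset.mem_image.mpr ⟨i, Finset.mem_Icc.mpr ⟨hi1, hi2⟩, hiq⟩
    · intro h
      rcases h with ⟨⟨⟨ha1, han⟩, he2⟩, hM⟩ | hp
      · refine ⟨⟨ha1, han⟩, (chi_eq_one_iff k a).mpr ?_⟩
        rintro (⟨ho, _⟩ | ⟨_, hM'⟩)
        · omega
        · exact hM hM'
      · rw [hP] at hp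
        obtain ⟨i, hi, hiq⟩ := Finset.mem_image.mp hp
        simp only [Finset.mem_Icc] at hi
        have hik : k - 1 ≤ i ∧ i ≤ 2 * k - 4 := hi
        have hprime : (q i).Prime := q_prime i
        have hodd : q i % 2 = 1 := q_odd (by omega)
        have hlt : q i < q (2 * k - 3) := q_lt_q (by omega)
        have h2q : 2 ≤ q i := two_le_q i
        have hqk2 : q (k - 2) < q i := q_lt_q (by omega)
        subst hiq
        refine ⟨⟨by omega, by omega⟩, (chi_eq_one_iff k (q i)).mpr ?_⟩
        rintro (⟨ho, h1⟩ | ⟨he, _⟩)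
        · rcases h1 with h1 | h1
          · omega
          · rw [hprime.minFac_eq] at h1; omega
        · omega
  rw [hdecomp]
  -- cardinalities
  have hEcard : E.card = n / 2 := by
    have : E = (Finset.Icc 1 (n / 2)).image (fun i => 2 * i) := by
      apply Finset.ext
      intro a
      simp only [hE, Finset.mem_filter, Finset.mem_Icc, Finset.mem_image]
      constructor
      · rintro ⟨⟨h1, h2⟩, h3⟩
        exact ⟨a / 2, by omega, by omega⟩
      · rintro ⟨i, hi, rfl⟩
        omega
    rw [this, Finset.card_image_of_injective _ (fun i j h => by omega), Nat.card_Icc]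
    omega
  have hMcard : (Mv k).card = k - 2 := by
    rw [Mv, Finset.card_image_of_injective _ (mul_right_injective₀ (by norm_num : (6:ℕ) ≠ 0)), Nat.card_Icc]
    omega
  have hMsub : Mv k ⊆ E := by
    intro a ha
    rw [Mv] at ha
    obtain ⟨i, hi, rfl⟩ := Finset.mem_image.mp ha
    simp only [Finset.mem_Icc] at hi
    simp only [hE, Finset.mem_filter, Finset.mem_Icc]
    omega
  have hPcard : P.card = k - 2 := by
    have hinj : Function.Injective (fun i => q i) :=
      fun i j h => Nat.nth_injective Nat.infinite_setOf_prime h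
    rw [hP, Finset.card_image_of_injective _ hinj, Nat.card_Icc]
    omega
  have hdisj : Disjoint (E \ Mv k) P := by
    rw [Finset.disjoint_left]
    intro a ha hp
    have hae : a % 2 = 0 := by
      have := (Finset.mem_sdiff.mp ha).1
      rw [hE] at this
      exact (Finset.mem_filter.mp this).2
    rw [hP] at hp
    obtain ⟨i, hi, rfl⟩ := Finset.mem_image.mp hp
    simp only [Finset.mem_Icc] at hi
    have := q_odd (i := i) (by omega)
    omega
  rw [Finset.card_union_of_disjoint hdisj, Finset.card_sdiff_of_subset hMsub, hEcard, hMcard, hPcard]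
  omega

omit hk in
lemma fin2_iff (x : Fin 2) : x = 0 ↔ ¬ x = 1 := by fin_cases x <;> simp

/-- Part C : the coloring is balanced -/
lemma partC :
    ((((Finset.Icc 1 (q (2 * k - 3) - 1)).filter fun a => chi k a = 0).card : ℤ) -
      (((Finset.Icc 1 (q (2 * k - 3) - 1)).filter fun a => chi k a = 1).card : ℤ)).natAbs ≤ 1 := by
  set n := q (2 * k - 3) - 1 with hn
  have h1 : ((Finset.Icc 1 n).filter (fun a => chi k a = 1)).card = n / 2 := card_one k hk
  have hsplit := Finset.card_filter_add_card_filter_not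
    (s := Finset.Icc 1 n) (p := fun a => chi k a = 1)
  have h0 : ((Finset.Icc 1 n).filter (fun a => chi k a = 0)).card
      = ((Finset.Icc 1 n).filter (fun a => ¬ chi k a = 1)).card := by
    congr 1
    apply Finset.filter_congr
    intro x _
    exact fin2_iff (chi k x)
  have hcic : (Finset.Icc 1 n).card = n := by rw [Nat.card_Icc]; omega
  have hne : n % 2 = 0 := n_even k hk
  have h2 : ((Finset.Icc 1 n).filter (fun a => chi k a = 0)).card = n / 2 := by omega
  rw [h1, h2]
  simp

omit hk in
lemma fin2_iff' (x : Fin 2) : x = 1 ↔ ¬ x = 0 := by fin_cases x <;> simp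

/-- Part D : upper bound -/
lemma partD (n : ℕ) (χ : ℕ → Fin 2)
    (hno : ∀ i : Fin 2, ¬ ∃ S : Finset ℕ, ↑S ⊆ Set.Icc 1 n ∧ (∀ a ∈ S, χ a = i) ∧
      (S : Set ℕ).Pairwise Nat.Coprime ∧ S.card = k) :
    n ≤ q (2 * k - 3) - 1 := by
  by_contra hcon
  push_neg at hcon
  have hQn : q (2 * k - 3) ≤ n := by omega
  set F : Finset ℕ := insert 1 ((Finset.range (2 * k - 2)).image (fun i => q i)) with hF
  have h1F : (1 : ℕ) ∉ (Finset.range (2 * k - 2)).image (fun i => q i) := by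
    intro h
    obtain ⟨i, _, hi⟩ := Finset.mem_image.mp h
    have := two_le_q i
    omega
  have hinj : Function.Injective (fun i => q i) :=
    fun i j h => Nat.nth_injective Nat.infinite_setOf_prime h
  have hFcard : F.card = 2 * k - 1 := by
    rw [hF, Finset.card_insert_of_notMem h1F,
      Finset.card_image_of_injective _ hinj, Finset.card_range]
    omega
  have hFsub : ↑F ⊆ Set.Icc 1 n := by
    intro a ha
    simp only [hF, Finset.coe_insert, Set.mem_insert_iff, Finset.coe_image] at ha
    rcases ha with rfl | ⟨i, hi, rfl⟩
    · exact Set.mem_Icc.mpr ⟨le_refl 1, by omega⟩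
    · simp only [Finset.mem_coe, Finset.mem_range] at hi
      have h2 := two_le_q i
      have hle : q i ≤ q (2 * k - 3) := q_le_q (by omega)
      show q i ∈ Set.Icc 1 n
      exact Set.mem_Icc.mpr ⟨by omega, by omega⟩
  have hFcop : (↑F : Set ℕ).Pairwise Nat.Coprime := by
    intro a ha b hb hne
    simp only [hF, Finset.coe_insert, Set.mem_insert_iff, Finset.coe_image,
      Set.mem_image, Finset.mem_coe, Finset.mem_range] at ha hb
    rcases ha with rfl | ⟨i, _, rfl⟩
    · exact Nat.coprime_one_left b
    · rcases hb with rfl | ⟨j, _, rfl⟩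
      · exact Nat.coprime_one_right _
      · exact (Nat.coprime_primes (q_prime i) (q_prime j)).mpr
          (fun h => hne (by rw [h]))
  have hsplit := Finset.card_filter_add_card_filter_not
    (s := F) (p := fun a => χ a = 0)
  have hone : (F.filter (fun a => ¬ χ a = 0)).card = (F.filter (fun a => χ a = 1)).card := by
    congr 1
    apply Finset.filter_congr
    intro x _
    exact (fin2_iff' (χ x)).symm
  have hbig : ∃ i : Fin 2, k ≤ (F.filter (fun a => χ a = i)).card := by
    by_contra h
    push_neg at h
    have h0 := h 0
    have h1 := h 1
    omega
  obtain ⟨i, hi⟩ := hbig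
  obtain ⟨T, hTsub, hTcard⟩ := Finset.exists_subset_card_eq hi
  refine hno i ⟨T, ?_, ?_, ?_, hTcard⟩
  · intro a ha
    exact hFsub (Finset.mem_coe.mpr (Finset.filter_subset _ _ (hTsub (Finset.mem_coe.mp ha))))
  · intro a ha
    exact (Finset.mem_filter.mp (hTsub ha)).2
  · exact hFcop.mono (by
      intro a ha
      exact Finset.mem_coe.mpr (Finset.filter_subset _ _ (hTsub (Finset.mem_coe.mp ha))))

end Main

theorem main (k : ℕ) (hk : 2 ≤ k) :
    IsGreatest {n : ℕ | ∃ χ : ℕ → Fin 2,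
      ((((Finset.Icc 1 n).filter fun a => χ a = 0).card : ℤ) -
        (((Finset.Icc 1 n).filter fun a => χ a = 1).card : ℤ)).natAbs ≤ 1 ∧
      ∀ i : Fin 2, ¬ ∃ S : Finset ℕ, ↑S ⊆ Set.Icc 1 n ∧ (∀ a ∈ S, χ a = i) ∧
        (S : Set ℕ).Pairwise Nat.Coprime ∧ S.card = k}
    (Nat.nth Nat.Prime (2 * k - 3) - 1) := by
  constructor
  · refine ⟨chi k, partC k hk, ?_⟩
    intro i
    fin_cases i
    · exact partA k hk
    · exact partB k hk
  · rintro n ⟨χ, _, hno⟩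
    exact partD k hk n χ hno

end BTC


/-- Exact balanced two-color endpoint: for `k ≥ 2`, the largest `n` admitting a
two-coloring of `{1,...,n}` with color classes differing in size by at most one
and no monochromatic set of `k` pairwise coprime integers is `p_{2k-2} - 1`. -/
theorem balanced_two_color_endpoint (k : ℕ) (hk : 2 ≤ k) :
    IsGreatest {n : ℕ | ∃ χ : ℕ → Fin 2,
      ((((Finset.Icc 1 n).filter fun a => χ a = 0).card : ℤ) -
        (((Finset.Icc 1 n).filter fun a => χ a = 1).card : ℤ)).natAbs ≤ 1 ∧
      ∀ i : Fin 2, ¬ ∃ S : Finset ℕ, ↑S ⊆ Set.Icc 1 n ∧ (∀ a ∈ S, χ a = i) ∧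
        (S : Set ℕ).Pairwise Nat.Coprime ∧ S.card = k}
    (Nat.nth Nat.Prime (2 * k - 3) - 1) :=
  BTC.main k hk
end

section
/- Let s,t ≥ 2. The largest n admitting a two-coloring of {1,...,n} with color classes differing by at most one, with no k-element pairwise coprime set in color 0 for k = s and none in color 1 for k = t, equals p_{s+t−2} − 1. -/
open Finset



private lemma card_mod6 (r N : ℕ) (hr : r < 6) :
    ((Finset.range N).filter (fun m => m % 6 = r)).card = (N + 5 - r) / 6 := by
  induction N with
  | zero => simp; omega
  | succ n ih =>
    rw [Finset.range_add_one, Finset.filter_insert]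
    split_ifs with h
    · rw [Finset.card_insert_of_notMem (by simp), ih]; omega
    · rw [ih]; omega

private lemma card_mod6' (N : ℕ) (hN : 2 ≤ N) :
    ((Finset.range N).filter (fun m => m % 6 = 1 ∧ m ≠ 1)).card = (N + 4) / 6 - 1 := by
  have he : (Finset.range N).filter (fun m => m % 6 = 1 ∧ m ≠ 1)
      = ((Finset.range N).filter (fun m => m % 6 = 1)).erase 1 := by
    ext m; simp [Finset.mem_erase, and_comm]; tauto
  rw [he, Finset.card_erase_of_mem (by simp; omega), card_mod6 1 N (by norm_num)]
  omega

private lemma count_prime_le (N : ℕ) (hN : 2 ≤ N) :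
    Nat.count Nat.Prime N ≤ 1 + (N + 4) / 6 + N / 6 := by
  rw [Nat.count_eq_card_filter_range]
  have hsub : (Finset.range N).filter Nat.Prime ⊆
      insert 2 (insert 3 ((Finset.range N).filter (fun m => (m % 6 = 1 ∧ m ≠ 1) ∨ m % 6 = 5))) := by
    intro q hq
    simp only [Finset.mem_filter, Finset.mem_range] at hq
    obtain ⟨hqN, hqp⟩ := hq
    by_cases h2 : q = 2
    · simp [h2]
    by_cases h3 : q = 3
    · simp [h3]
    simp only [Finset.mem_insert, Finset.mem_filter, Finset.mem_range]
    right; right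
    refine ⟨hqN, ?_⟩
    have hd2 : ¬ 2 ∣ q := fun hd =>
      h2 ((Nat.Prime.eq_one_or_self_of_dvd hqp 2 hd).resolve_left (by norm_num)).symm
    have hd3 : ¬ 3 ∣ q := fun hd =>
      h3 ((Nat.Prime.eq_one_or_self_of_dvd hqp 3 hd).resolve_left (by norm_num)).symm
    have h1 : q ≠ 1 := Nat.Prime.ne_one hqp
    omega
  have hbb : (Finset.range N).filter (fun x => Nat.Prime x) = (Finset.range N).filter Nat.Prime := rfl
  have h1 := Finset.card_le_card hsub
  have h2 := Finset.card_insert_le 2 (insert 3 ((Finset.range N).filter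
      (fun m => (m % 6 = 1 ∧ m ≠ 1) ∨ m % 6 = 5)))
  have h3 := Finset.card_insert_le 3 ((Finset.range N).filter
      (fun m => (m % 6 = 1 ∧ m ≠ 1) ∨ m % 6 = 5))
  have h4 : ((Finset.range N).filter (fun m => (m % 6 = 1 ∧ m ≠ 1) ∨ m % 6 = 5)).card
      ≤ ((N + 4) / 6 - 1) + N / 6 := by
    rw [Finset.filter_or]
    refine le_trans (Finset.card_union_le _ _) ?_
    rw [card_mod6' N hN, card_mod6 5 N (by norm_num)]
    omega
  rw [hbb]
  omega

private lemma nth_prime_lower (j : ℕ) : 3 * j ≤ Nat.nth Nat.Prime j + 2 := by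
  rcases Nat.lt_or_ge j 2 with hj | hj
  · interval_cases j
    · simp
    · rw [Nat.nth_prime_one_eq_three]; omega
  · set p := Nat.nth Nat.Prime j with hp
    have hpp : p.Prime := Nat.prime_nth_prime j
    have hcount : Nat.count Nat.Prime p = j := Nat.count_nth_of_infinite Nat.infinite_setOf_prime j
    have hp5 : 5 ≤ p := by
      calc 5 = Nat.nth Nat.Prime 2 := by
              have h5 : Nat.count Nat.Prime 5 = 2 := by rw [Nat.count_eq_card_filter_range]; decide
              rw [← h5, Nat.nth_count (by norm_num)]
        _ ≤ p := (Nat.nth_le_nth Nat.infinite_setOf_prime).mpr hj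
    have hd2 : ¬ 2 ∣ p := fun hd => by
      have := (Nat.Prime.eq_one_or_self_of_dvd hpp 2 hd).resolve_left (by norm_num); omega
    have hd3 : ¬ 3 ∣ p := fun hd => by
      have := (Nat.Prime.eq_one_or_self_of_dvd hpp 3 hd).resolve_left (by norm_num); omega
    have hcle := count_prime_le p (by omega)
    have hm : p % 6 = 1 ∨ p % 6 = 5 := by omega
    rcases hm with h | h <;> omega



private lemma nth_prime_val {p j : ℕ} (hp : p.Prime) (h : Nat.count Nat.Prime p = j) :
    Nat.nth Nat.Prime j = p := h ▸ Nat.nth_count hp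

private lemma nth2 : Nat.nth Nat.Prime 2 = 5 :=
  nth_prime_val (by norm_num) (by rw [Nat.count_eq_card_filter_range]; decide)
private lemma nth3 : Nat.nth Nat.Prime 3 = 7 :=
  nth_prime_val (by norm_num) (by rw [Nat.count_eq_card_filter_range]; decide)
private lemma nth4 : Nat.nth Nat.Prime 4 = 11 :=
  nth_prime_val (by norm_num) (by rw [Nat.count_eq_card_filter_range]; decide)
private lemma nth5 : Nat.nth Nat.Prime 5 = 13 :=
  nth_prime_val (by norm_num) (by rw [Nat.count_eq_card_filter_range]; decide)
private lemma nth6 : Nat.nth Nat.Prime 6 = 17 :=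
  nth_prime_val (by norm_num) (by rw [Nat.count_eq_card_filter_range]; decide)
private lemma nth7 : Nat.nth Nat.Prime 7 = 19 :=
  nth_prime_val (by norm_num) (by rw [Nat.count_eq_card_filter_range]; decide)
private lemma nth9 : Nat.nth Nat.Prime 9 = 29 :=
  nth_prime_val (by norm_num) (by rw [Nat.count_eq_card_filter_range]; decide)
private lemma nth11 : Nat.nth Nat.Prime 11 = 37 :=
  nth_prime_val (by norm_num) (by rw [Nat.count_eq_card_filter_range]; decide)

/-- Chebyshev-type bound from the central binomial coefficient. -/
private lemma cheb (m : ℕ) (hm : 4 ≤ m) :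
    2 * m < Nat.clog 2 (2 * m) * (Nat.count Nat.Prime (2 * m + 1) + 1) := by
  set B := Nat.centralBinom m with hB
  have hBne : B ≠ 0 := Nat.centralBinom_ne_zero m
  have hm0 : 0 < 2 * m := by omega
  -- B ≤ (2m)^π
  have hsupp : B.primeFactors ⊆ (Finset.range (2 * m + 1)).filter Nat.Prime := by
    intro p hp
    have hpp : p.Prime := Nat.prime_of_mem_primeFactors hp
    have hfac : B.factorization p ≠ 0 := by
      have hdvd : p ∣ B := Nat.dvd_of_mem_primeFactors hp
      exact (Nat.Prime.factorization_pos_of_dvd hpp hBne hdvd).ne'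
    have hple : p ≤ 2 * m := by
      by_contra hgt
      exact hfac (Nat.factorization_centralBinom_eq_zero_of_two_mul_lt (by omega))
    simp only [Finset.mem_filter, Finset.mem_range]
    exact ⟨by omega, hpp⟩
  have hcard : B.primeFactors.card ≤ Nat.count Nat.Prime (2 * m + 1) := by
    rw [Nat.count_eq_card_filter_range]
    exact Finset.card_le_card hsupp
  have hBle : B ≤ (2 * m) ^ Nat.count Nat.Prime (2 * m + 1) := by
    have h1 : B = B.factorization.prod (· ^ ·) := (Nat.factorization_prod_pow_eq_self hBne).symm
    have h2 : B.factorization.prod (· ^ ·) = ∏ p ∈ B.primeFactors, p ^ B.factorization p := by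
      rw [Finsupp.prod, Nat.support_factorization]
    have h3 : ∏ p ∈ B.primeFactors, p ^ B.factorization p ≤ (2 * m) ^ B.primeFactors.card := by
      refine Finset.prod_le_pow_card _ _ _ (fun p _ => ?_)
      exact Nat.pow_factorization_choose_le hm0
    calc B = B.factorization.prod (· ^ ·) := h1
      _ = ∏ p ∈ B.primeFactors, p ^ B.factorization p := h2
      _ ≤ (2 * m) ^ B.primeFactors.card := h3
      _ ≤ (2 * m) ^ Nat.count Nat.Prime (2 * m + 1) := Nat.pow_le_pow_right (by omega) hcard
  -- 4^m < (2m)^(π+1)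
  have h4 : 4 ^ m < (2 * m) ^ (Nat.count Nat.Prime (2 * m + 1) + 1) := by
    calc 4 ^ m < m * B := Nat.four_pow_lt_mul_centralBinom m hm
      _ ≤ (2 * m) * (2 * m) ^ Nat.count Nat.Prime (2 * m + 1) :=
          Nat.mul_le_mul (by omega) hBle
      _ = (2 * m) ^ (Nat.count Nat.Prime (2 * m + 1) + 1) := by ring
  -- pass to clog
  have hL : 2 * m ≤ 2 ^ Nat.clog 2 (2 * m) := Nat.le_pow_clog (by norm_num) _
  have h5 : (2:ℕ) ^ (2 * m) < 2 ^ (Nat.clog 2 (2 * m) * (Nat.count Nat.Prime (2 * m + 1) + 1)) := by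
    calc (2:ℕ) ^ (2 * m) = 4 ^ m := by rw [show (4:ℕ) = 2^2 by norm_num, ← Nat.pow_mul]
      _ < (2 * m) ^ (Nat.count Nat.Prime (2 * m + 1) + 1) := h4
      _ ≤ (2 ^ Nat.clog 2 (2 * m)) ^ (Nat.count Nat.Prime (2 * m + 1) + 1) :=
          Nat.pow_le_pow_left hL _
      _ = 2 ^ (Nat.clog 2 (2 * m) * (Nat.count Nat.Prime (2 * m + 1) + 1)) := by
          rw [← Nat.pow_mul]
  exact (Nat.pow_lt_pow_iff_right (by norm_num)).mp h5

private lemma pow_aux : ∀ c, 6 ≤ c → 4 * c - 2 ≤ 2 ^ (c - 1) := by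
  intro c hc
  induction c with
  | zero => omega
  | succ n ih =>
    rcases Nat.lt_or_ge n 6 with h | h
    · interval_cases n <;> simp_all <;> omega
    · have := ih (by omega)
      have h2 : 2 ^ (n - 1) ≥ 4 := by
        calc (4:ℕ) = 2 ^ 2 := by norm_num
          _ ≤ 2 ^ (n-1) := Nat.pow_le_pow_right (by norm_num) (by omega)
      have h3 : (2:ℕ) ^ (n + 1 - 1) = 2 ^ (n-1) * 2 := by
        rw [← Nat.pow_succ]; congr 1; omega
      omega

private lemma clog_bound (Q : ℕ) (hQ : 19 ≤ Q) : 4 * Nat.clog 2 Q ≤ Q + 1 := by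
  set c := Nat.clog 2 Q with hc
  rcases Nat.lt_or_ge c 6 with h | h
  · omega
  · have h1 : 2 ^ (c - 1) < Q := by
      by_contra hle
      have : c ≤ c - 1 := (Nat.clog_le_iff_le_pow (by norm_num)).mpr (by omega)
      omega
    have := pow_aux c h
    omega



private lemma add_two_le_nth (k : ℕ) : k + 2 ≤ Nat.nth Nat.Prime k := by
  induction k with
  | zero => rw [Nat.nth_prime_zero_eq_two]
  | succ n ih =>
    have h : Nat.nth Nat.Prime n < Nat.nth Nat.Prime (n+1) :=
      (Nat.nth_lt_nth Nat.infinite_setOf_prime).mpr (by omega)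
    omega

/-- `p_{2k} ≤ p_{k+1}^2` (0-indexed: `nth (2k-1) ≤ (nth k)^2`). -/
private lemma nth_sq (k : ℕ) (hk : 1 ≤ k) :
    Nat.nth Nat.Prime (2 * k - 1) ≤ (Nat.nth Nat.Prime k) ^ 2 := by
  rcases Nat.lt_or_ge k 7 with hk7 | hk7
  · interval_cases k
    · rw [Nat.nth_prime_one_eq_three]; omega
    · rw [nth3, nth2]; omega
    · rw [nth5, nth3]; omega
    · rw [nth7, nth4]; omega
    · rw [nth9, nth5]; omega
    · rw [nth11, nth6]; omega
  · set Q := Nat.nth Nat.Prime k with hQdef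
    have hQp : Q.Prime := Nat.prime_nth_prime k
    have hQ19 : 19 ≤ Q := by
      have h77 : Nat.nth Nat.Prime 7 ≤ Nat.nth Nat.Prime k :=
        (Nat.nth_le_nth Nat.infinite_setOf_prime).mpr hk7
      rw [nth7] at h77; exact h77
    have hQodd : ¬ 2 ∣ Q := fun hd => by
      have := (Nat.Prime.eq_one_or_self_of_dvd hQp 2 hd).resolve_left (by norm_num); omega
    have hkQ : k + 2 ≤ Q := add_two_le_nth k
    -- show 2k ≤ count Prime (Q^2)
    have hcount : 2 * k ≤ Nat.count Nat.Prime (Q ^ 2) := by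
      by_contra hlt
      push_neg at hlt
      set m := (Q ^ 2 - 1) / 2 with hm
      have hQQ : Q ^ 2 = Q * Q := sq Q
      have hQsq_odd : ¬ 2 ∣ Q ^ 2 := by
        rw [hQQ]; intro h
        rcases (Nat.Prime.dvd_mul Nat.prime_two).mp h with h' | h' <;> exact hQodd h'
      have h2m : 2 * m = Q ^ 2 - 1 := by
        have : Q ^ 2 % 2 = 1 := by omega
        omega
      have hm4 : 4 ≤ m := by
        have h361 : 19 * 19 ≤ Q * Q := Nat.mul_le_mul hQ19 hQ19
        omega
      have hch := cheb m hm4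
      have h2m1 : 2 * m + 1 = Q ^ 2 := by
        have : Q ^ 2 % 2 = 1 := by omega
        omega
      rw [h2m1] at hch
      -- L ≤ 2 * clog 2 Q
      have hLle : Nat.clog 2 (2 * m) ≤ 2 * Nat.clog 2 Q := by
        refine (Nat.clog_le_iff_le_pow (by norm_num)).mpr ?_
        calc 2 * m ≤ Q ^ 2 := by omega
          _ ≤ (2 ^ Nat.clog 2 Q) ^ 2 := Nat.pow_le_pow_left (Nat.le_pow_clog (by norm_num) Q) 2
          _ = 2 ^ (2 * Nat.clog 2 Q) := by rw [← Nat.pow_mul, Nat.mul_comm]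
      have hclogQ := clog_bound Q hQ19
      -- combine: Q^2 - 1 < (2 clog Q) * (2k) ≤ (Q+1)/4*4 * ... 
      have hc1 : Nat.count Nat.Prime (Q ^ 2) + 1 ≤ 2 * k := by omega
      have hmain : 2 * m < 2 * Nat.clog 2 Q * (2 * k) := by
        calc 2 * m < Nat.clog 2 (2 * m) * (Nat.count Nat.Prime (Q ^ 2) + 1) := hch
          _ ≤ (2 * Nat.clog 2 Q) * (2 * k) := Nat.mul_le_mul hLle hc1
      -- 4*(Q^2-1) < 16 clogQ k ≤ 4(Q+1)(Q-2)
      have hfin : 4 * (Q ^ 2 - 1) < 4 * ((Q + 1) * (Q - 2)) := by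
        calc 4 * (Q ^ 2 - 1) = 2 * (2 * (2 * m)) := by omega
          _ < 2 * (2 * (2 * Nat.clog 2 Q * (2 * k))) := by omega
          _ = (4 * Nat.clog 2 Q) * (4 * k) := by ring
          _ ≤ (Q + 1) * (4 * k) := Nat.mul_le_mul_right _ hclogQ
          _ ≤ (Q + 1) * (4 * (Q - 2)) := Nat.mul_le_mul_left _ (by omega)
          _ = 4 * ((Q + 1) * (Q - 2)) := by ring
      have hx : (Q + 1) * (Q - 2) + Q + 1 ≤ Q ^ 2 := by
        have h2Q : 2 ≤ Q := by omega
        zify [h2Q]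
        nlinarith
      omega
    have hmono : Nat.count Nat.Prime (Q ^ 2) ≤ Nat.count Nat.Prime (Q ^ 2 + 1) :=
      Nat.count_monotone _ (by omega)
    have hlt2 : Nat.nth Nat.Prime (2 * k - 1) < Q ^ 2 + 1 :=
      Nat.nth_lt_of_lt_count (by omega)
    omega



private lemma count_three : Nat.count Nat.Prime 3 = 1 := by
  rw [Nat.count_eq_card_filter_range]; decide

private lemma prime_eq_nth_of_lt {x j : ℕ} (hx : x.Prime) (hc : Nat.count Nat.Prime x = j) :
    Nat.nth Nat.Prime j = x := hc ▸ Nat.nth_count hx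

private lemma two_dvd_prime {p : ℕ} (hp : p.Prime) (h : 2 ∣ p) : p = 2 :=
  ((Nat.Prime.eq_one_or_self_of_dvd hp 2 h).resolve_left (by norm_num)).symm

private lemma mem_side (s t : ℕ) (hs : 3 ≤ s) (ht : 2 ≤ t) (hts : t ≤ s) :
    ∃ χ : ℕ → Fin 2,
      ((((Finset.Icc 1 (Nat.nth Nat.Prime (s + t - 3) - 1)).filter fun a => χ a = 0).card : ℤ) -
        (((Finset.Icc 1 (Nat.nth Nat.Prime (s + t - 3) - 1)).filter fun a => χ a = 1).card : ℤ)).natAbs ≤ 1 ∧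
      (¬ ∃ S : Finset ℕ, ↑S ⊆ Set.Icc 1 (Nat.nth Nat.Prime (s + t - 3) - 1) ∧ (∀ a ∈ S, χ a = 0) ∧
        (S : Set ℕ).Pairwise Nat.Coprime ∧ S.card = s) ∧
      ¬ ∃ S : Finset ℕ, ↑S ⊆ Set.Icc 1 (Nat.nth Nat.Prime (s + t - 3) - 1) ∧ (∀ a ∈ S, χ a = 1) ∧
        (S : Set ℕ).Pairwise Nat.Coprime ∧ S.card = t := by
  have hinf := Nat.infinite_setOf_prime
  set P := Nat.nth Nat.Prime (s + t - 3) with hPdef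
  set n := P - 1 with hndef
  have hPp : P.Prime := Nat.prime_nth_prime _
  have hP5 : 5 ≤ P := by
    have h2 : Nat.nth Nat.Prime 2 ≤ Nat.nth Nat.Prime (s + t - 3) :=
      (Nat.nth_le_nth hinf).mpr (by omega)
    have : Nat.nth Nat.Prime 2 = 5 :=
      prime_eq_nth_of_lt (by norm_num) (by rw [Nat.count_eq_card_filter_range]; decide)
    omega
  have hPodd : ¬ 2 ∣ P := fun h => by have := two_dvd_prime hPp h; omega
  have hn2 : n % 2 = 0 := by omega
  have hn4 : 4 ≤ n := by omega
  set Q := Nat.nth Nat.Prime (s - 2) with hQdef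
  have hQp : Q.Prime := Nat.prime_nth_prime _
  have hQ3 : 3 ≤ Q := by
    have h1 : Nat.nth Nat.Prime 1 ≤ Nat.nth Nat.Prime (s - 2) :=
      (Nat.nth_le_nth hinf).mpr (by omega)
    rw [Nat.nth_prime_one_eq_three] at h1; exact h1
  have hQP : Q < P := (Nat.nth_lt_nth hinf).mpr (by omega)
  have hcQ : Nat.count Nat.Prime Q = s - 2 := Nat.count_nth_of_infinite hinf _
  have hcP : Nat.count Nat.Prime P = s + t - 3 := Nat.count_nth_of_infinite hinf _
  have hcQ1 : Nat.count Nat.Prime (Q + 1) = s - 1 := by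
    rw [Nat.count_succ, hcQ, if_pos hQp]; omega
  -- the set of odd numbers in [1,n] with least factor > Q
  set Xf := (Finset.Icc 1 n).filter (fun x => ¬ 2 ∣ x ∧ x ≠ 1 ∧ Q < x.minFac) with hXfdef
  -- every element of Xf is prime
  have hXfprime : ∀ x ∈ Xf, x.Prime ∧ Q < x ∧ x ≤ n := by
    intro x hx
    simp only [hXfdef, Finset.mem_filter, Finset.mem_Icc] at hx
    obtain ⟨⟨hx1, hxn⟩, hxodd, hxne1, hxQ⟩ := hx
    have hfp : (x.minFac).Prime := Nat.minFac_prime hxne1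
    have hcmf : s - 1 ≤ Nat.count Nat.Prime x.minFac :=
      hcQ1 ▸ Nat.count_monotone _ (by omega)
    have hRle : Nat.nth Nat.Prime (s - 1) ≤ x.minFac := by
      have := prime_eq_nth_of_lt hfp rfl
      calc Nat.nth Nat.Prime (s - 1) ≤ Nat.nth Nat.Prime (Nat.count Nat.Prime x.minFac) :=
            (Nat.nth_le_nth hinf).mpr hcmf
        _ = x.minFac := Nat.nth_count hfp
    have hxp : x.Prime := by
      by_contra hnp
      have hsq : x.minFac ^ 2 ≤ x := Nat.minFac_sq_le_self (by omega) hnp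
      have hPle : P ≤ (Nat.nth Nat.Prime (s - 1)) ^ 2 := by
        calc P ≤ Nat.nth Nat.Prime (2 * (s - 1) - 1) := (Nat.nth_le_nth hinf).mpr (by omega)
          _ ≤ (Nat.nth Nat.Prime (s - 1)) ^ 2 := nth_sq (s - 1) (by omega)
      have : (Nat.nth Nat.Prime (s-1))^2 ≤ x.minFac ^2 := Nat.pow_le_pow_left hRle 2
      omega
    have : x.minFac = x := (Nat.Prime.minFac_eq hxp)
    exact ⟨hxp, by omega, hxn⟩
  -- card Xf ≤ t - 2
  have hXfcard : Xf.card ≤ t - 2 := by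
    have hsub : Xf ⊆ (Finset.Icc (s - 1) (s + t - 4)).image (Nat.nth Nat.Prime) := by
      intro x hx
      obtain ⟨hxp, hxQ, hxn⟩ := hXfprime x hx
      have hj : Nat.nth Nat.Prime (Nat.count Nat.Prime x) = x := Nat.nth_count hxp
      have hge : s - 1 ≤ Nat.count Nat.Prime x := hcQ1 ▸ Nat.count_monotone _ (by omega)
      have hle' : Nat.count Nat.Prime x ≤ s + t - 3 := hcP ▸ Nat.count_monotone _ (by omega)
      have hne : Nat.count Nat.Prime x ≠ s + t - 3 := by
        intro he
        rw [he] at hj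
        omega
      exact Finset.mem_image.mpr ⟨Nat.count Nat.Prime x, Finset.mem_Icc.mpr (by omega), hj⟩
    calc Xf.card ≤ _ := Finset.card_le_card hsub
      _ ≤ (Finset.Icc (s - 1) (s + t - 4)).card := Finset.card_image_le
      _ = t - 2 := by rw [Nat.card_Icc]; omega
  -- the pool of multiples of 6
  set pool := (Finset.Icc 1 n).filter (fun x => 6 ∣ x) with hpooldef
  have hpoolcard : pool.card = n / 6 := Nat.Ioc_filter_dvd_card_eq_div n 6
  have hpoolbig : t - 2 ≤ pool.card := by
    have h1 := nth_prime_lower (2 * t - 3)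
    have h2 : Nat.nth Nat.Prime (2 * t - 3) ≤ P := (Nat.nth_le_nth hinf).mpr (by omega)
    omega
  obtain ⟨F, hFpool, hFcard⟩ := Finset.exists_subset_card_eq (le_trans hXfcard hpoolbig)
  have hF6 : ∀ x ∈ F, 6 ∣ x ∧ 1 ≤ x ∧ x ≤ n := by
    intro x hx
    have := hFpool hx
    simp only [hpooldef, Finset.mem_filter, Finset.mem_Icc] at this
    exact ⟨this.2, this.1.1, this.1.2⟩
  -- the coloring
  refine ⟨fun a => if a = 1 ∨ (¬ 2 ∣ a ∧ a.minFac ≤ Q) ∨ a ∈ F then 0 else 1, ?_, ?_, ?_⟩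
  · -- balance
    have fin2 : ∀ v : Fin 2, (¬ v = 0) ↔ v = 1 := by decide
    have hchi1 : ∀ a : ℕ,
        ((if a = 1 ∨ (¬ 2 ∣ a ∧ a.minFac ≤ Q) ∨ a ∈ F then (0:Fin 2) else 1) = 1)
          ↔ ¬ (a = 1 ∨ (¬ 2 ∣ a ∧ a.minFac ≤ Q) ∨ a ∈ F) := by
      intro a
      split_ifs with h
      · exact iff_of_false (by decide) (not_not_intro h)
      · exact iff_of_true rfl h
    have hset : (Finset.Icc 1 n).filter
          (fun a => (if a = 1 ∨ (¬ 2 ∣ a ∧ a.minFac ≤ Q) ∨ a ∈ F then (0:Fin 2) else 1) = 1)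
        = (((Finset.Icc 1 n).filter (fun a => 2 ∣ a)) \ F) ∪ Xf := by
      ext a
      simp only [Finset.mem_union, Finset.mem_sdiff, Finset.mem_filter, Finset.mem_Icc, hchi1,
        hXfdef]
      constructor
      · rintro ⟨⟨ha1, han⟩, hnc⟩
        push_neg at hnc
        obtain ⟨hne1, hsm, hnF⟩ := hnc
        by_cases h2 : 2 ∣ a
        · exact Or.inl ⟨⟨⟨ha1, han⟩, h2⟩, hnF⟩
        · exact Or.inr ⟨⟨ha1, han⟩, h2, hne1, by have := hsm h2; omega⟩
      · rintro (⟨⟨⟨ha1, han⟩, h2⟩, hnF⟩ | ⟨⟨ha1, han⟩, h2, hne1, hQlt⟩)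
        · refine ⟨⟨ha1, han⟩, ?_⟩
          push_neg
          exact ⟨by omega, fun ho => absurd h2 ho, hnF⟩
        · refine ⟨⟨ha1, han⟩, ?_⟩
          push_neg
          refine ⟨hne1, fun _ => by omega, fun hF => h2 (dvd_trans (by norm_num) (hF6 a hF).1)⟩
    have hEcard : ((Finset.Icc 1 n).filter (fun a => 2 ∣ a)).card = n / 2 :=
      Nat.Ioc_filter_dvd_card_eq_div n 2
    have hFsubE : F ⊆ (Finset.Icc 1 n).filter (fun a => 2 ∣ a) := by
      intro x hx
      obtain ⟨h6, h1, hn'⟩ := hF6 x hx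
      exact Finset.mem_filter.mpr ⟨Finset.mem_Icc.mpr ⟨h1, hn'⟩, dvd_trans (by norm_num) h6⟩
    have hdisj : Disjoint (((Finset.Icc 1 n).filter (fun a => 2 ∣ a)) \ F) Xf := by
      rw [Finset.disjoint_left]
      intro a ha hb
      simp only [Finset.mem_sdiff, Finset.mem_filter] at ha
      simp only [hXfdef, Finset.mem_filter] at hb
      exact hb.2.1 ha.1.2
    have hc1 : ((Finset.Icc 1 n).filter
        (fun a => (if a = 1 ∨ (¬ 2 ∣ a ∧ a.minFac ≤ Q) ∨ a ∈ F then (0:Fin 2) else 1) = 1)).card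
        = n / 2 := by
      rw [hset, Finset.card_union_of_disjoint hdisj, Finset.card_sdiff_of_subset hFsubE, hEcard, hFcard]
      have := Finset.card_le_card hFsubE
      rw [hEcard] at this
      omega
    have hpart := Finset.card_filter_add_card_filter_not (s := Finset.Icc 1 n)
      (p := fun a => (if a = 1 ∨ (¬ 2 ∣ a ∧ a.minFac ≤ Q) ∨ a ∈ F then (0:Fin 2) else 1) = 0)
    have hcongr : (Finset.Icc 1 n).filter
        (fun a => ¬ ((if a = 1 ∨ (¬ 2 ∣ a ∧ a.minFac ≤ Q) ∨ a ∈ F then (0:Fin 2) else 1) = 0))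
        = (Finset.Icc 1 n).filter
        (fun a => (if a = 1 ∨ (¬ 2 ∣ a ∧ a.minFac ≤ Q) ∨ a ∈ F then (0:Fin 2) else 1) = 1) := by
      apply Finset.filter_congr
      intro a _
      simp only [fin2]
    rw [hcongr, hc1, Nat.card_Icc] at hpart
    have hc0 : ((Finset.Icc 1 n).filter
        (fun a => (if a = 1 ∨ (¬ 2 ∣ a ∧ a.minFac ≤ Q) ∨ a ∈ F then (0:Fin 2) else 1) = 0)).card
        = n / 2 := by omega
    rw [hc0, hc1]
    simp
  · -- no s-element pairwise coprime set in color 0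
    rintro ⟨S, hsub, hcol, hcop, hcard⟩
    set w : ℕ → ℕ := fun x => Nat.minFac (x / 2 ^ x.factorization 2) with hwdef
    have hw : ∀ x ∈ S.erase 1, (¬ 2 ∣ w x) ∧ (w x).Prime ∧ w x ≤ Q ∧ w x ∣ x := by
      intro x hx
      obtain ⟨hxne1, hxS⟩ := Finset.mem_erase.mp hx
      have hxI : x ∈ Set.Icc 1 n := hsub (Finset.mem_coe.mpr hxS)
      have hx1 : 1 ≤ x := hxI.1
      have hcx : (if x = 1 ∨ (¬ 2 ∣ x ∧ x.minFac ≤ Q) ∨ x ∈ F then (0:Fin 2) else 1) = 0 :=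
        hcol x hxS
      have hcond : x = 1 ∨ (¬ 2 ∣ x ∧ x.minFac ≤ Q) ∨ x ∈ F := by
        by_contra hnc
        rw [if_neg hnc] at hcx
        exact absurd hcx (by decide)
      rcases hcond with h1 | ⟨hodd, hsm⟩ | hF
      · exact absurd h1 hxne1
      · have hfac0 : x.factorization 2 = 0 := Nat.factorization_eq_zero_of_not_dvd hodd
        have hwx : w x = x.minFac := by rw [hwdef]; simp [hfac0]
        rw [hwx]
        have hfp := Nat.minFac_prime hxne1
        refine ⟨fun h2 => hodd ?_, hfp, hsm, Nat.minFac_dvd x⟩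
        have := two_dvd_prime hfp h2
        exact this ▸ Nat.minFac_dvd x
      · obtain ⟨h6, _, _⟩ := hF6 x hF
        have hxne0 : x ≠ 0 := by omega
        set m := x / 2 ^ x.factorization 2 with hmdef
        have hmodd : ¬ 2 ∣ m := Nat.not_dvd_ordCompl Nat.prime_two hxne0
        have hmdvd : m ∣ x := Nat.ordCompl_dvd x 2
        have h3x : 3 ∣ x := dvd_trans (by norm_num) h6
        have h3m : 3 ∣ m := by
          have heq : 2 ^ x.factorization 2 * m = x := Nat.ordProj_mul_ordCompl_eq_self x 2
          have hcop3 : Nat.Coprime 3 (2 ^ x.factorization 2) :=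
            Nat.Coprime.pow_right _ (by norm_num)
          have h3mm : 3 ∣ 2 ^ x.factorization 2 * m := by
            rw [heq]; exact h3x
          exact hcop3.dvd_of_dvd_mul_left h3mm
        have hmne1 : m ≠ 1 := fun h => by rw [h] at h3m; omega
        have hfp := Nat.minFac_prime hmne1
        refine ⟨fun h2 => hmodd ?_, hfp, le_trans (Nat.minFac_le_of_dvd (by norm_num) h3m) hQ3,
          dvd_trans (Nat.minFac_dvd m) hmdvd⟩
        have := two_dvd_prime hfp h2
        exact this ▸ Nat.minFac_dvd m
    have hmaps : ∀ x ∈ S.erase 1, w x ∈ (Finset.Icc 1 (s - 2)).image (Nat.nth Nat.Prime) := by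
      intro x hx
      obtain ⟨hwodd, hwp, hwQ, _⟩ := hw x hx
      have h3 : 3 ≤ w x := by
        have := hwp.two_le
        rcases Nat.lt_or_ge (w x) 3 with h | h
        · interval_cases (w x) <;> simp_all
        · exact h
      have hc3 : 1 ≤ Nat.count Nat.Prime (w x) := count_three ▸ Nat.count_monotone _ h3
      have hcs : Nat.count Nat.Prime (w x) ≤ s - 2 := hcQ ▸ Nat.count_monotone _ hwQ
      exact Finset.mem_image.mpr ⟨Nat.count Nat.Prime (w x), Finset.mem_Icc.mpr ⟨hc3, hcs⟩,
        Nat.nth_count hwp⟩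
    have hinj : Set.InjOn w (S.erase 1) := by
      intro x hx y hy hxy
      by_contra hne
      have hcxy : Nat.Coprime x y := hcop (Finset.mem_coe.mpr (Finset.mem_of_mem_erase hx))
        (Finset.mem_coe.mpr (Finset.mem_of_mem_erase hy)) hne
      obtain ⟨_, hwp, _, hdx⟩ := hw x hx
      obtain ⟨_, _, _, hdy⟩ := hw y hy
      have : w x ∣ Nat.gcd x y := Nat.dvd_gcd hdx (hxy ▸ hdy)
      rw [Nat.Coprime.gcd_eq_one hcxy] at this
      exact hwp.one_lt.ne' (Nat.dvd_one.mp this)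
    have hle := Finset.card_le_card_of_injOn w hmaps hinj
    have hTcard : ((Finset.Icc 1 (s - 2)).image (Nat.nth Nat.Prime)).card ≤ s - 2 :=
      le_trans Finset.card_image_le (by rw [Nat.card_Icc]; omega)
    have herase : S.card - 1 ≤ (S.erase 1).card := Finset.pred_card_le_card_erase
    omega
  · -- no t-element pairwise coprime set in color 1
    rintro ⟨S, hsub, hcol, hcop, hcard⟩
    set w : ℕ → ℕ := fun x => if 2 ∣ x then 2 else x.minFac with hwdef
    set T := insert 2 ((Finset.Icc (s - 1) (s + t - 4)).image (Nat.nth Nat.Prime)) with hTdef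
    have hw : ∀ x ∈ S, (w x).Prime ∧ w x ∣ x ∧ w x ∈ T := by
      intro x hxS
      have hxI : x ∈ Set.Icc 1 n := hsub (Finset.mem_coe.mpr hxS)
      have hx1 : 1 ≤ x := hxI.1
      have hxn : x ≤ n := hxI.2
      have hcx : (if x = 1 ∨ (¬ 2 ∣ x ∧ x.minFac ≤ Q) ∨ x ∈ F then (0:Fin 2) else 1) = 1 :=
        hcol x hxS
      have hcond : ¬ (x = 1 ∨ (¬ 2 ∣ x ∧ x.minFac ≤ Q) ∨ x ∈ F) := by
        intro hc
        rw [if_pos hc] at hcx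
        exact absurd hcx (by decide)
      push_neg at hcond
      obtain ⟨hxne1, hsm, hnF⟩ := hcond
      by_cases h2 : 2 ∣ x
      · rw [hwdef]
        simp only [if_pos h2]
        exact ⟨Nat.prime_two, h2, Finset.mem_insert_self _ _⟩
      · have hwx : w x = x.minFac := by rw [hwdef]; simp [h2]
        have hfp := Nat.minFac_prime hxne1
        have hQlt : Q < x.minFac := by have := hsm h2; omega
        have hge : s - 1 ≤ Nat.count Nat.Prime x.minFac :=
          hcQ1 ▸ Nat.count_monotone _ (by omega)
        have hmfle : x.minFac ≤ x := Nat.minFac_le (by omega)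
        have hle' : Nat.count Nat.Prime x.minFac ≤ s + t - 3 :=
          hcP ▸ Nat.count_monotone _ (by omega)
        have hne : Nat.count Nat.Prime x.minFac ≠ s + t - 3 := by
          intro he
          have := Nat.nth_count hfp
          rw [he] at this
          omega
        rw [hwx]
        refine ⟨hfp, Nat.minFac_dvd x, ?_⟩
        rw [hTdef]
        refine Finset.mem_insert_of_mem (Finset.mem_image.mpr
          ⟨Nat.count Nat.Prime x.minFac, Finset.mem_Icc.mpr (by omega), Nat.nth_count hfp⟩)
    have hmaps : ∀ x ∈ S, w x ∈ T := fun x hx => (hw x hx).2.2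
    have hinj : Set.InjOn w S := by
      intro x hx y hy hxy
      by_contra hne
      have hcxy : Nat.Coprime x y := hcop hx hy hne
      obtain ⟨hwp, hdx, _⟩ := hw x (Finset.mem_coe.mp hx)
      obtain ⟨_, hdy, _⟩ := hw y (Finset.mem_coe.mp hy)
      have : w x ∣ Nat.gcd x y := Nat.dvd_gcd hdx (hxy ▸ hdy)
      rw [Nat.Coprime.gcd_eq_one hcxy] at this
      exact hwp.one_lt.ne' (Nat.dvd_one.mp this)
    have hle := Finset.card_le_card_of_injOn w hmaps hinj
    have hTcard : T.card ≤ t - 1 := by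
      rw [hTdef]
      refine le_trans (Finset.card_insert_le _ _) ?_
      have := Finset.card_image_le (s := Finset.Icc (s - 1) (s + t - 4)) (f := Nat.nth Nat.Prime)
      rw [Nat.card_Icc] at this
      omega
    omega



private lemma prime_eq_nth_of_lt' {x j : ℕ} (hx : x.Prime) (hc : Nat.count Nat.Prime x = j) :
    Nat.nth Nat.Prime j = x := hc ▸ Nat.nth_count hx

/-- Upper bound part. -/
private lemma upper_bd (s t n : ℕ) (hs : 2 ≤ s) (ht : 2 ≤ t) (χ : ℕ → Fin 2)
    (h0 : ¬ ∃ S : Finset ℕ, ↑S ⊆ Set.Icc 1 n ∧ (∀ a ∈ S, χ a = 0) ∧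
        (S : Set ℕ).Pairwise Nat.Coprime ∧ S.card = s)
    (h1 : ¬ ∃ S : Finset ℕ, ↑S ⊆ Set.Icc 1 n ∧ (∀ a ∈ S, χ a = 1) ∧
        (S : Set ℕ).Pairwise Nat.Coprime ∧ S.card = t) :
    n ≤ Nat.nth Nat.Prime (s + t - 3) - 1 := by
  have hinf := Nat.infinite_setOf_prime
  by_contra hgt
  push_neg at hgt
  set P := Nat.nth Nat.Prime (s + t - 3) with hPdef
  have hPn : P ≤ n := by
    have : 2 ≤ P := (Nat.prime_nth_prime _).two_le
    omega
  set C : Finset ℕ := insert 1 ((Finset.range (s + t - 2)).image (Nat.nth Nat.Prime)) with hCdef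
  have h1C : (1:ℕ) ∉ (Finset.range (s + t - 2)).image (Nat.nth Nat.Prime) := by
    intro h
    obtain ⟨j, _, hj⟩ := Finset.mem_image.mp h
    exact absurd (hj ▸ (Nat.prime_nth_prime j).two_le) (by omega)
  have hCcard : C.card = s + t - 1 := by
    rw [hCdef, Finset.card_insert_of_notMem h1C,
      Finset.card_image_of_injective _ (Nat.nth_injective hinf), Finset.card_range]
    omega
  have hCsub : ↑C ⊆ Set.Icc 1 n := by
    intro x hx
    rw [hCdef] at hx
    simp only [Finset.coe_insert, Set.mem_insert_iff, Finset.coe_image, Set.mem_image,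
      Finset.mem_coe, Finset.mem_range] at hx
    rcases hx with rfl | ⟨j, hj, rfl⟩
    · exact ⟨le_refl 1, by omega⟩
    · refine ⟨(Nat.prime_nth_prime j).one_lt.le, ?_⟩
      have : Nat.nth Nat.Prime j ≤ P := (Nat.nth_le_nth hinf).mpr (by omega)
      omega
  have hCcop : (↑C : Set ℕ).Pairwise Nat.Coprime := by
    intro x hx y hy hne
    rw [hCdef] at hx hy
    simp only [Finset.coe_insert, Set.mem_insert_iff, Finset.coe_image, Set.mem_image,
      Finset.mem_coe, Finset.mem_range] at hx hy
    rcases hx with rfl | ⟨j, _, rfl⟩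
    · exact Nat.coprime_one_left _
    rcases hy with rfl | ⟨k, _, rfl⟩
    · exact Nat.coprime_one_right _
    · exact (Nat.coprime_primes (Nat.prime_nth_prime j) (Nat.prime_nth_prime k)).mpr hne
  have fin2 : ∀ v : Fin 2, (¬ v = 0) ↔ v = 1 := by decide
  have hpart := Finset.card_filter_add_card_filter_not (s := C) (p := fun a => χ a = 0)
  have hcongr : C.filter (fun a => ¬ (χ a = 0)) = C.filter (fun a => χ a = 1) :=
    Finset.filter_congr (fun a _ => by rw [fin2])
  rw [hcongr, hCcard] at hpart
  have hcases : s ≤ (C.filter (fun a => χ a = 0)).card ∨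
      t ≤ (C.filter (fun a => χ a = 1)).card := by omega
  rcases hcases with hcase | hcase
  · obtain ⟨S, hS, hScard⟩ := Finset.exists_subset_card_eq hcase
    refine h0 ⟨S, ?_, ?_, ?_, hScard⟩
    · exact le_trans (Finset.coe_subset.mpr (le_trans hS (Finset.filter_subset _ _))) hCsub
    · exact fun a ha => (Finset.mem_filter.mp (hS ha)).2
    · exact hCcop.mono (Finset.coe_subset.mpr (le_trans hS (Finset.filter_subset _ _)))
  · obtain ⟨S, hS, hScard⟩ := Finset.exists_subset_card_eq hcase
    refine h1 ⟨S, ?_, ?_, ?_, hScard⟩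
    · exact le_trans (Finset.coe_subset.mpr (le_trans hS (Finset.filter_subset _ _))) hCsub
    · exact fun a ha => (Finset.mem_filter.mp (hS ha)).2
    · exact hCcop.mono (Finset.coe_subset.mpr (le_trans hS (Finset.filter_subset _ _)))

/-- base case s = t = 2 -/
private lemma mem_base :
    ∃ χ : ℕ → Fin 2,
      ((((Finset.Icc 1 2).filter fun a => χ a = 0).card : ℤ) -
        (((Finset.Icc 1 2).filter fun a => χ a = 1).card : ℤ)).natAbs ≤ 1 ∧
      (¬ ∃ S : Finset ℕ, ↑S ⊆ Set.Icc 1 2 ∧ (∀ a ∈ S, χ a = 0) ∧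
        (S : Set ℕ).Pairwise Nat.Coprime ∧ S.card = 2) ∧
      ¬ ∃ S : Finset ℕ, ↑S ⊆ Set.Icc 1 2 ∧ (∀ a ∈ S, χ a = 1) ∧
        (S : Set ℕ).Pairwise Nat.Coprime ∧ S.card = 2 := by
  refine ⟨fun a => if a = 1 then 0 else 1, by decide, ?_, ?_⟩
  · rintro ⟨S, hsub, hcol, -, hcard⟩
    have hS1 : ∀ x ∈ S, x = 1 := by
      intro x hx
      have hc : (if x = 1 then (0:Fin 2) else 1) = 0 := hcol x hx
      by_contra h
      rw [if_neg h] at hc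
      exact absurd hc (by decide)
    have : S ⊆ {1} := fun x hx => Finset.mem_singleton.mpr (hS1 x hx)
    have := Finset.card_le_card this
    simp at this
    omega
  · rintro ⟨S, hsub, hcol, -, hcard⟩
    have hS1 : ∀ x ∈ S, x = 2 := by
      intro x hx
      have hc : (if x = 1 then (0:Fin 2) else 1) = 1 := hcol x hx
      have hxI := hsub (Finset.mem_coe.mpr hx)
      have h1 : 1 ≤ x := hxI.1
      have h2 : x ≤ 2 := hxI.2
      rcases Nat.lt_or_ge x 2 with h | h
      · have hx1 : x = 1 := by omega
        rw [if_pos hx1] at hc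
        exact absurd hc (by decide)
      · omega
    have : S ⊆ {2} := fun x hx => Finset.mem_singleton.mpr (hS1 x hx)
    have := Finset.card_le_card this
    simp at this
    omega



/-- Off-diagonal balanced endpoint: for `s, t ≥ 2`, the largest `n` admitting a
near-balanced two-coloring of `{1,...,n}` with no `s`-element pairwise coprime set
in color 0 and no `t`-element pairwise coprime set in color 1 is `p_{s+t-2} - 1`. -/
theorem balanced_off_diagonal_endpoint (s t : ℕ) (hs : 2 ≤ s) (ht : 2 ≤ t) :
    IsGreatest {n : ℕ | ∃ χ : ℕ → Fin 2,
      ((((Finset.Icc 1 n).filter fun a => χ a = 0).card : ℤ) -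
        (((Finset.Icc 1 n).filter fun a => χ a = 1).card : ℤ)).natAbs ≤ 1 ∧
      (¬ ∃ S : Finset ℕ, ↑S ⊆ Set.Icc 1 n ∧ (∀ a ∈ S, χ a = 0) ∧
        (S : Set ℕ).Pairwise Nat.Coprime ∧ S.card = s) ∧
      ¬ ∃ S : Finset ℕ, ↑S ⊆ Set.Icc 1 n ∧ (∀ a ∈ S, χ a = 1) ∧
        (S : Set ℕ).Pairwise Nat.Coprime ∧ S.card = t}
    (Nat.nth Nat.Prime (s + t - 3) - 1) := by
  constructor
  · -- membership
    rcases Nat.lt_or_ge s 3 with hs3 | hs3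
    · -- s = 2
      have hseq : s = 2 := by omega
      subst hseq
      rcases Nat.lt_or_ge t 3 with ht3 | ht3
      · -- t = 2
        have hteq : t = 2 := by omega
        subst hteq
        have h1 : (2:ℕ) + 2 - 3 = 1 := by norm_num
        show ∃ χ : ℕ → Fin 2, _
        rw [h1, Nat.nth_prime_one_eq_three]
        exact mem_base
      · -- s = 2 < t : swap
        obtain ⟨χ, hbal, h0, h1⟩ := mem_side t 2 ht3 (by norm_num) (by omega)
        have hco : t + 2 - 3 = 2 + t - 3 := by omega
        rw [hco] at hbal h0 h1
        set n := Nat.nth Nat.Prime (2 + t - 3) - 1 with hndef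
        refine ⟨fun a => if χ a = 0 then 1 else 0, ?_, ?_, ?_⟩
        · have he0 : (Finset.Icc 1 n).filter (fun a => (if χ a = 0 then (1:Fin 2) else 0) = 0)
              = (Finset.Icc 1 n).filter (fun a => χ a = 1) := by
            apply Finset.filter_congr
            intro a _
            rcases (by decide : ∀ v : Fin 2, v = 0 ∨ v = 1) (χ a) with h | h <;> simp [h]
          have he1 : (Finset.Icc 1 n).filter (fun a => (if χ a = 0 then (1:Fin 2) else 0) = 1)
              = (Finset.Icc 1 n).filter (fun a => χ a = 0) := by
            apply Finset.filter_congr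
            intro a _
            rcases (by decide : ∀ v : Fin 2, v = 0 ∨ v = 1) (χ a) with h | h <;> simp [h]
          rw [he0, he1]
          omega
        · rintro ⟨S, hsub, hcol, hcop, hcard⟩
          refine h1 ⟨S, hsub, ?_, hcop, hcard⟩
          intro a ha
          have hc : (if χ a = 0 then (1:Fin 2) else 0) = 0 := hcol a ha
          rcases (by decide : ∀ v : Fin 2, v = 0 ∨ v = 1) (χ a) with h | h
          · rw [if_pos h] at hc; exact absurd hc (by decide)
          · exact h
        · rintro ⟨S, hsub, hcol, hcop, hcard⟩
          refine h0 ⟨S, hsub, ?_, hcop, hcard⟩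
          intro a ha
          have hc : (if χ a = 0 then (1:Fin 2) else 0) = 1 := hcol a ha
          rcases (by decide : ∀ v : Fin 2, v = 0 ∨ v = 1) (χ a) with h | h
          · exact h
          · rw [if_neg (by simp [h])] at hc; exact absurd hc (by decide)
    · rcases le_or_gt t s with hts | hst
      · exact mem_side s t hs3 ht hts
      · -- s < t : swap
        obtain ⟨χ, hbal, h0, h1⟩ := mem_side t s (by omega) hs (by omega)
        have hco : t + s - 3 = s + t - 3 := by omega
        rw [hco] at hbal h0 h1
        set n := Nat.nth Nat.Prime (s + t - 3) - 1 with hndef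
        refine ⟨fun a => if χ a = 0 then 1 else 0, ?_, ?_, ?_⟩
        · have he0 : (Finset.Icc 1 n).filter (fun a => (if χ a = 0 then (1:Fin 2) else 0) = 0)
              = (Finset.Icc 1 n).filter (fun a => χ a = 1) := by
            apply Finset.filter_congr
            intro a _
            rcases (by decide : ∀ v : Fin 2, v = 0 ∨ v = 1) (χ a) with h | h <;> simp [h]
          have he1 : (Finset.Icc 1 n).filter (fun a => (if χ a = 0 then (1:Fin 2) else 0) = 1)
              = (Finset.Icc 1 n).filter (fun a => χ a = 0) := by
            apply Finset.filter_congr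
            intro a _
            rcases (by decide : ∀ v : Fin 2, v = 0 ∨ v = 1) (χ a) with h | h <;> simp [h]
          rw [he0, he1]
          omega
        · rintro ⟨S, hsub, hcol, hcop, hcard⟩
          refine h1 ⟨S, hsub, ?_, hcop, hcard⟩
          intro a ha
          have hc : (if χ a = 0 then (1:Fin 2) else 0) = 0 := hcol a ha
          rcases (by decide : ∀ v : Fin 2, v = 0 ∨ v = 1) (χ a) with h | h
          · rw [if_pos h] at hc; exact absurd hc (by decide)
          · exact h
        · rintro ⟨S, hsub, hcol, hcop, hcard⟩
          refine h0 ⟨S, hsub, ?_, hcop, hcard⟩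
          intro a ha
          have hc : (if χ a = 0 then (1:Fin 2) else 0) = 1 := hcol a ha
          rcases (by decide : ∀ v : Fin 2, v = 0 ∨ v = 1) (χ a) with h | h
          · exact h
          · rw [if_neg (by simp [h])] at hc; exact absurd hc (by decide)
  · -- upper bound
    rintro n ⟨χ, hbal, h0, h1⟩
    exact upper_bd s t n hs ht χ h0 h1
end
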